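/- arXiv:2502.05920 — 4 statements merged into one kernel-verified Lean document; each statement's English description precedes it below -/
import Mathlib

section
/- Let Γ be a basic game, let μ be a Bayes correlated Wardrop equilibrium of Γ, and let ψ : Y × Θ → ℝ be continuous. Then for every ε > 0 there exists a direct information structure I such that the obedient interim flow profile of I is a Bayesian Wardrop ε-equilibrium of (Γ, I), and for every θ ∈ Θ, |∫ ψ(y,θ) dμ(y|θ) − ∫ ψ(y,θ) dμ̆_I(y|θ)| ≤ ε, where μ̆_I is the obedient outcome of I. -/
noncomputable section

namespace NonatomicGames

/-- An information structure: finitely many populations with sizes summing to one,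
a finite type set per population, and a signal distribution `π θ` for each state. -/
structure InfoStructure (Θ : Type) where
  K : Type
  [instFintypeK : Fintype K]
  [instDecEqK : DecidableEq K]
  T : K → Type
  [instFintypeT : ∀ k, Fintype (T k)]
  [instDecEqT : ∀ k, DecidableEq (T k)]
  γ : K → ℝ
  γ_pos : ∀ k, 0 < γ k
  γ_sum : ∑ k, γ k = 1
  π : Θ → (∀ k, T k) → ℝ
  π_nonneg : ∀ θ τ, 0 ≤ π θ τ
  π_sum : ∀ θ, ∑ τ, π θ τ = 1

attribute [instance] InfoStructure.instFintypeK InfoStructure.instDecEqK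
  InfoStructure.instFintypeT InfoStructure.instDecEqT

/-- A direct information structure: the type set of each population is the action set `A`. -/
structure DirectInfoStructure (A Θ : Type) [Fintype A] [DecidableEq A] where
  K : Type
  [instFintypeK : Fintype K]
  [instDecEqK : DecidableEq K]
  γ : K → ℝ
  γ_pos : ∀ k, 0 < γ k
  γ_sum : ∑ k, γ k = 1
  π : Θ → (K → A) → ℝ
  π_nonneg : ∀ θ τ, 0 ≤ π θ τ
  π_sum : ∀ θ, ∑ τ, π θ τ = 1

attribute [instance] DirectInfoStructure.instFintypeK DirectInfoStructure.instDecEqK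


section AuxForProof
open Finset MeasureTheory
set_option linter.unusedSectionVars false
set_option maxHeartbeats 1000000
variable {A : Type} [Fintype A] [DecidableEq A]

def cnt {N : ℕ} (τ : Fin N → A) (a : A) : ℕ := (univ.filter fun k => τ k = a).card

lemma sum_cnt {N : ℕ} (τ : Fin N → A) : ∑ a, cnt τ a = N := by
  have := (Finset.card_eq_sum_card_fiberwise (fun (k : Fin N) (_ : k ∈ univ) => mem_univ (τ k)))
  simpa [cnt] using this.symm

lemma exists_cnt_eq {N : ℕ} (v : A → ℕ) (hv : ∑ a, v a = N) :
    ∃ τ : Fin N → A, cnt τ = v := by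
  have hcard : Fintype.card (Σ a : A, Fin (v a)) = N := by
    simp [Fintype.card_sigma, hv]
  let e := Fintype.equivFinOfCardEq hcard
  refine ⟨fun k => (e.symm k).1, funext fun a => ?_⟩
  have h1 : cnt (fun k => (e.symm k).1) a = ∑ k : Fin N, if (e.symm k).1 = a then 1 else 0 := by
    rw [cnt, Finset.card_filter]
  have h2 : ∑ k : Fin N, (if (e.symm k).1 = a then 1 else 0)
      = ∑ s : Σ a : A, Fin (v a), (if s.1 = a then 1 else 0) :=
    Fintype.sum_equiv e.symm _ _ (fun k => rfl)
  have h3 : ∑ s : Σ a : A, Fin (v a), (if s.1 = a then 1 else 0) = v a := by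
    rw [← Finset.univ_sigma_univ, Finset.sum_sigma]
    simp [apply_ite Finset.card, Finset.sum_ite_eq]
  omega

lemma cnt_comp_perm {N : ℕ} (τ : Fin N → A) (σ : Equiv.Perm (Fin N)) (a : A) :
    cnt (τ ∘ σ) a = cnt τ a := by
  unfold cnt
  apply Finset.card_nbij' (fun k => σ k) (fun k => σ.symm k) <;> simp [Set.MapsTo, Set.LeftInvOn, Set.RightInvOn]

lemma class_count {N : ℕ} (v : A → ℕ) (k : Fin N) (a : A) :
    (univ.filter fun τ : Fin N → A => cnt τ = v ∧ τ k = a).card * N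
      = v a * (univ.filter fun τ : Fin N → A => cnt τ = v).card := by
  -- step A : independence of k
  have hind : ∀ k' : Fin N,
      (univ.filter fun τ : Fin N → A => cnt τ = v ∧ τ k' = a).card
        = (univ.filter fun τ : Fin N → A => cnt τ = v ∧ τ k = a).card := by
    intro k'
    apply Finset.card_nbij' (fun τ => τ ∘ (Equiv.swap k k')) (fun τ => τ ∘ (Equiv.swap k k'))
    · intro τ hτ
      simp only [Finset.mem_coe, mem_filter, mem_univ, true_and] at hτ ⊢
      refine ⟨funext fun b => ?_, ?_⟩
      · rw [cnt_comp_perm]; rw [hτ.1]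
      · simpa [Equiv.swap_apply_left] using hτ.2
    · intro τ hτ
      simp only [Finset.mem_coe, mem_filter, mem_univ, true_and] at hτ ⊢
      refine ⟨funext fun b => ?_, ?_⟩
      · rw [cnt_comp_perm]; rw [hτ.1]
      · simpa [Equiv.swap_apply_right] using hτ.2
    · intro τ _; funext b; simp [Function.comp]
    · intro τ _; funext b; simp [Function.comp]
  -- step B : double counting
  have hdc : ∑ k' : Fin N, (univ.filter fun τ : Fin N → A => cnt τ = v ∧ τ k' = a).card
      = v a * (univ.filter fun τ : Fin N → A => cnt τ = v).card := by
    have h1 : ∀ k' : Fin N,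
        (univ.filter fun τ : Fin N → A => cnt τ = v ∧ τ k' = a).card
          = ∑ τ ∈ univ.filter (fun τ : Fin N → A => cnt τ = v), if τ k' = a then 1 else 0 := by
      intro k'
      rw [← Finset.filter_filter, Finset.card_filter]
    simp only [h1]
    rw [Finset.sum_comm]
    have h2 : ∀ τ : Fin N → A, cnt τ = v →
        ∑ k' : Fin N, (if τ k' = a then 1 else 0) = v a := by
      intro τ hτ
      rw [← Finset.card_filter]
      have := congrFun hτ a
      rw [← this]; rfl
    rw [Finset.sum_congr rfl (fun τ hτ => h2 τ (by simpa using (mem_filter.mp hτ).2))]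
    rw [Finset.sum_const, smul_eq_mul, mul_comm]
  calc (univ.filter fun τ : Fin N → A => cnt τ = v ∧ τ k = a).card * N
      = ∑ _k' : Fin N, (univ.filter fun τ : Fin N → A => cnt τ = v ∧ τ k = a).card := by
        simp [mul_comm]
    _ = ∑ k' : Fin N, (univ.filter fun τ : Fin N → A => cnt τ = v ∧ τ k' = a).card := by
        exact Finset.sum_congr rfl (fun k' _ => (hind k').symm)
    _ = v a * _ := hdc


variable {A : Type} [Fintype A] [DecidableEq A] [Nonempty A]

def recv (m : A → ℕ) : A := if h : ∃ a, 1 ≤ m a then h.choose else Classical.arbitrary A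

lemma recv_spec (m : A → ℕ) (h : ∃ a, 1 ≤ m a) : 1 ≤ m (recv m) := by
  rw [recv, dif_pos h]; exact h.choose_spec

def mfun (N : ℕ) (y : A → ℝ) : A → ℕ := fun a => min ⌊(N : ℝ) * y a⌋₊ N

def Vaux (N : ℕ) (m : A → ℕ) : A → ℕ :=
  fun a => m a + if a = recv m then N - ∑ b, m b else 0

def Vnat (N : ℕ) (y : A → ℝ) : A → ℕ := Vaux N (mfun N y)

def rnd (N : ℕ) (y : A → ℝ) : A → ℝ := fun a => (Vnat N y a : ℝ) / N

lemma measurable_rnd (N : ℕ) : Measurable (rnd (A := A) N) := by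
  have h1 : Measurable (mfun (A := A) N) := by
    apply measurable_pi_lambda
    intro a
    exact (measurable_of_countable (fun n : ℕ => min n N)).comp
      ((Nat.measurable_floor).comp ((measurable_pi_apply a).const_mul _))
  exact (measurable_of_countable
    (fun m : A → ℕ => (fun a => (Vaux N m a : ℝ) / N : A → ℝ))).comp h1

section simplex
variable {N : ℕ} {y : A → ℝ}

lemma stdSimplex_le_one (hy : y ∈ stdSimplex ℝ A) (a : A) : y a ≤ 1 := by
  rw [← hy.2]
  exact Finset.single_le_sum (fun b _ => hy.1 b) (mem_univ a)

lemma mfun_eq (hy : y ∈ stdSimplex ℝ A) : mfun N y = fun a => ⌊(N : ℝ) * y a⌋₊ := by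
  funext a
  rw [mfun, min_eq_left]
  calc ⌊(N : ℝ) * y a⌋₊ ≤ ⌊(N : ℝ)⌋₊ := by
        apply Nat.floor_le_floor
        calc (N : ℝ) * y a ≤ N * 1 := by
              apply mul_le_mul_of_nonneg_left (stdSimplex_le_one hy a) (Nat.cast_nonneg N)
          _ = N := mul_one _
    _ = N := Nat.floor_natCast N

lemma mfun_le (hy : y ∈ stdSimplex ℝ A) (a : A) : (mfun N y a : ℝ) ≤ N * y a := by
  rw [mfun_eq hy]
  exact Nat.floor_le (mul_nonneg (Nat.cast_nonneg N) (hy.1 a))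

lemma lt_mfun (hy : y ∈ stdSimplex ℝ A) (a : A) : (N : ℝ) * y a - 1 < mfun N y a := by
  rw [mfun_eq hy]
  have := Nat.lt_floor_add_one ((N : ℝ) * y a)
  linarith

lemma sum_mfun_le (hy : y ∈ stdSimplex ℝ A) : ∑ a, mfun N y a ≤ N := by
  have h : ((∑ a, mfun N y a : ℕ) : ℝ) ≤ N := by
    push_cast
    calc ∑ a, (mfun N y a : ℝ) ≤ ∑ a, (N : ℝ) * y a :=
          Finset.sum_le_sum fun a _ => mfun_le hy a
      _ = N := by rw [← Finset.mul_sum, hy.2, mul_one]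
  exact_mod_cast h

lemma sum_mfun_gt (hy : y ∈ stdSimplex ℝ A) :
    (N : ℝ) - Fintype.card A < ∑ a, (mfun N y a : ℝ) := by
  have h : ∑ a, ((N : ℝ) * y a - 1) < ∑ a, (mfun N y a : ℝ) :=
    Finset.sum_lt_sum_of_nonempty univ_nonempty fun a _ => lt_mfun hy a
  calc (N : ℝ) - Fintype.card A = ∑ a, ((N : ℝ) * y a - 1) := by
        rw [Finset.sum_sub_distrib, ← Finset.mul_sum, hy.2, mul_one]
        simp [Finset.card_univ]
    _ < _ := h

lemma exists_one_le_mfun (hy : y ∈ stdSimplex ℝ A) (hn : Fintype.card A ≤ N) :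
    ∃ a, 1 ≤ mfun N y a := by
  -- some coordinate has y a ≥ 1 / card A
  have hcard : 0 < (Fintype.card A : ℝ) := by
    exact_mod_cast Fintype.card_pos
  obtain ⟨a, -, ha⟩ : ∃ a ∈ univ, (1 : ℝ) / Fintype.card A ≤ y a := by
    apply Finset.exists_le_of_sum_le univ_nonempty
    rw [Finset.sum_const, hy.2]
    simp [Finset.card_univ]
  refine ⟨a, ?_⟩
  rw [mfun_eq hy]
  apply Nat.le_floor
  have h1 : (Fintype.card A : ℝ) ≤ N := by exact_mod_cast hn
  calc ((1:ℕ) : ℝ) = (Fintype.card A : ℝ) * (1 / Fintype.card A) := by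
        field_simp
        norm_num
    _ ≤ (N : ℝ) * y a := by
        apply mul_le_mul h1 ha (by positivity) (Nat.cast_nonneg N)


variable (hy : y ∈ stdSimplex ℝ A) (hn : Fintype.card A ≤ N)
include hy hn

lemma Npos : 0 < N := lt_of_lt_of_le Fintype.card_pos hn

lemma sum_Vnat : ∑ a, Vnat N y a = N := by
  have hle := sum_mfun_le (N := N) hy
  have : ∑ a, (if a = recv (mfun N y) then N - ∑ b, mfun N y b else 0) = N - ∑ b, mfun N y b := by
    rw [Finset.sum_ite_eq' univ (recv (mfun N y))]
    simp
  simp only [Vnat]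
  unfold Vaux
  rw [Finset.sum_add_distrib, this]
  omega

lemma Vnat_le (a : A) : (Vnat N y a : ℝ) ≤ (N : ℝ) * y a + Fintype.card A := by
  have h1 := mfun_le (N := N) hy a
  have hsum := sum_mfun_gt (N := N) hy
  have hd : ((N - ∑ b, mfun N y b : ℕ) : ℝ) ≤ Fintype.card A := by
    rcases le_or_gt N (∑ b, mfun N y b) with h | h
    · rw [Nat.sub_eq_zero_of_le h]
      simp [Fintype.card_pos.le]
    · rw [Nat.cast_sub h.le]
      push_cast at hsum ⊢
      linarith
  simp only [Vnat]
  unfold Vaux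
  rcases eq_or_ne a (recv (mfun N y)) with h | h
  · rw [if_pos h]
    push_cast at hd ⊢
    linarith
  · rw [if_neg h]
    push_cast
    linarith

lemma Vnat_gt (a : A) : (N : ℝ) * y a - 1 ≤ (Vnat N y a : ℝ) := by
  have h1 := lt_mfun (N := N) hy a
  have h2 : (mfun N y a : ℝ) ≤ Vnat N y a := by
    simp only [Vnat]; unfold Vaux
    push_cast
    have : (0:ℝ) ≤ (if a = recv (mfun N y) then ((N - ∑ b, mfun N y b : ℕ) : ℝ) else 0) := by
      split <;> positivity
    push_cast at this
    linarith
  linarith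

lemma rnd_mem : rnd N y ∈ stdSimplex ℝ A := by
  have hN : (0:ℝ) < N := by exact_mod_cast Npos (A:=A) (y:=y) hy hn
  constructor
  · intro a; simp only [rnd]; positivity
  · simp only [rnd]
    rw [← Finset.sum_div]
    rw [show ∑ a, ((Vnat N y a : ℝ)) = ((∑ a, Vnat N y a : ℕ) : ℝ) by push_cast; ring]
    rw [sum_Vnat hy hn, div_self (ne_of_gt hN)]

lemma rnd_dist (a : A) : |rnd N y a - y a| ≤ ((Fintype.card A : ℝ) + 1) / N := by
  have hN : (0:ℝ) < N := by exact_mod_cast Npos (A:=A) (y:=y) hy hn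
  have h1 := Vnat_le hy hn a
  have h2 := Vnat_gt hy hn a
  have e : rnd N y a - y a = ((Vnat N y a : ℝ) - N * y a) / N := by
    simp only [rnd]
    field_simp
  have hb : |(Vnat N y a : ℝ) - N * y a| ≤ (Fintype.card A : ℝ) + 1 := by
    rw [abs_le]
    constructor <;> linarith
  rw [e, abs_div, abs_of_pos hN]
  gcongr

lemma rnd_zero (a : A) (ha : y a = 0) : rnd N y a = 0 := by
  have hm : mfun N y a = 0 := by
    rw [mfun_eq hy]
    simp [ha]
  have hex := exists_one_le_mfun hy hn
  have hrecv : 1 ≤ mfun N y (recv (mfun N y)) := recv_spec _ hex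
  have hne : a ≠ recv (mfun N y) := by
    intro h
    rw [← h] at hrecv
    omega
  simp only [rnd, Vnat]
  unfold Vaux
  rw [if_neg hne, hm]
  simp

end simplex

section Meas
open MeasureTheory

def fvv {A : Type} (N : ℕ) (v : A → ℕ) : A → ℝ := fun a => (v a : ℝ) / N

variable {N : ℕ}

lemma rnd_eq_fvv (y : A → ℝ) : rnd (A := A) N y = fvv N (Vnat N y) := rfl

lemma fvv_inj (hN : 0 < N) {v v' : A → ℕ} (h : fvv N v = fvv N v') : v = v' := by
  funext a
  have := congrFun h a
  simp only [fvv] at this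
  have hN' : (0:ℝ) < N := by exact_mod_cast hN
  field_simp at this
  exact_mod_cast this

variable (μ : Measure (A → ℝ)) [IsProbabilityMeasure μ]

lemma ae_of_compl_null {s : Set (A → ℝ)} (h : μ sᶜ = 0) : ∀ᵐ x ∂μ, x ∈ s := by
  rw [ae_iff]; exact h

lemma restrict_simplex_eq (hSc : μ (stdSimplex ℝ A)ᶜ = 0) :
    μ.restrict (stdSimplex ℝ A) = μ :=
  Measure.restrict_eq_self_of_ae_mem (ae_of_compl_null μ hSc)

lemma integrable_of_contOn (hSc : μ (stdSimplex ℝ A)ᶜ = 0)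
    {g : (A → ℝ) → ℝ} (hg : ContinuousOn g (stdSimplex ℝ A)) : Integrable g μ := by
  have h : IntegrableOn g (stdSimplex ℝ A) μ :=
    hg.integrableOn_compact (isCompact_stdSimplex ℝ A)
  rwa [IntegrableOn, restrict_simplex_eq μ hSc] at h

lemma ae_mem_simplex (hSc : μ (stdSimplex ℝ A)ᶜ = 0) :
    ∀ᵐ y ∂μ, y ∈ stdSimplex ℝ A := ae_of_compl_null μ hSc

lemma disc_close [Nonempty A] (hn : Fintype.card A ≤ N) (hSc : μ (stdSimplex ℝ A)ᶜ = 0)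
    (g : (A → ℝ) → ℝ) (hg : ContinuousOn g (stdSimplex ℝ A))
    {ε' : ℝ} (hε' : 0 ≤ ε')
    (hmod : ∀ x ∈ stdSimplex ℝ A, ∀ z ∈ stdSimplex ℝ A,
      (∀ a, |x a - z a| ≤ ((Fintype.card A : ℝ) + 1) / N) → |g x - g z| ≤ ε') :
    |(∑ v ∈ (univ : Finset (Fin N → A)).image cnt,
        (μ (rnd N ⁻¹' {fvv N v})).toReal * g (fvv N v)) - ∫ y, g y ∂μ| ≤ ε' := by
  classical
  set S := stdSimplex ℝ A with hS
  have hN : 0 < N := lt_of_lt_of_le Fintype.card_pos hn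
  set V : Finset (A → ℕ) := (univ : Finset (Fin N → A)).image cnt with hV
  set P : (A → ℕ) → Set (A → ℝ) := fun v => rnd N ⁻¹' {fvv N v} with hP
  have hPm : ∀ v, MeasurableSet (P v) := fun v =>
    measurable_rnd N (measurableSet_singleton _)
  have hdisj : (V : Set (A → ℕ)).PairwiseDisjoint P := by
    intro v hv v' hv' hne
    apply Set.disjoint_left.mpr
    intro y hy hy'
    exact hne (fvv_inj hN (by rw [← Set.mem_singleton_iff.mp hy, ← Set.mem_singleton_iff.mp hy']))
  have hcover : S ⊆ ⋃ v ∈ V, P v := by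
    intro y hy
    have hmem : Vnat N y ∈ V := by
      obtain ⟨τ, hτ⟩ := exists_cnt_eq (Vnat N y) (sum_Vnat hy hn)
      exact Finset.mem_image.mpr ⟨τ, Finset.mem_univ τ, hτ⟩
    exact Set.mem_biUnion hmem (by exact rfl)
  have hUc : μ (⋃ v ∈ V, P v)ᶜ = 0 :=
    measure_mono_null (Set.compl_subset_compl.mpr hcover) hSc
  have hint : Integrable g μ := integrable_of_contOn μ hSc hg
  -- decompose the integral
  have hresU : μ.restrict (⋃ v ∈ V, P v) = μ :=
    Measure.restrict_eq_self_of_ae_mem (ae_of_compl_null μ hUc)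
  have hdecomp : ∫ y, g y ∂μ = ∑ v ∈ V, ∫ y in P v, g y ∂μ := by
    rw [← integral_biUnion_finset V (fun v _ => hPm v) hdisj
      (fun v _ => hint.integrableOn)]
    conv_lhs => rw [← hresU]
  -- per piece bound
  have hpiece : ∀ v ∈ V, |(μ (P v)).toReal * g (fvv N v) - ∫ y in P v, g y ∂μ|
      ≤ ε' * (μ (P v)).toReal := by
    intro v hv
    have hconst : ∫ _y in P v, g (fvv N v) ∂μ = (μ (P v)).toReal * g (fvv N v) := by
      rw [setIntegral_const, smul_eq_mul, measureReal_def]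
    rw [← hconst, ← integral_sub (integrable_const _) (hint.integrableOn)]
    have hbound : ∀ᵐ y ∂μ.restrict (P v), ‖g (fvv N v) - g y‖ ≤ ε' := by
      filter_upwards [ae_restrict_mem (hPm v), ae_restrict_of_ae (ae_mem_simplex μ hSc)]
        with y hyP hyS
      have hrnd : rnd N y = fvv N v := Set.mem_singleton_iff.mp hyP
      have hfv : fvv N v ∈ S := hrnd ▸ rnd_mem hyS hn
      have hdist : ∀ a, |fvv N v a - y a| ≤ ((Fintype.card A : ℝ) + 1) / N := by
        intro a
        have := rnd_dist hyS hn a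
        rw [hrnd] at this
        exact this
      simpa [Real.norm_eq_abs] using hmod _ hfv _ hyS hdist
    calc ‖∫ y in P v, (g (fvv N v) - g y) ∂μ‖
        ≤ ε' * (μ.restrict (P v) Set.univ).toReal :=
          norm_integral_le_of_norm_le_const hbound
      _ = ε' * (μ (P v)).toReal := by rw [Measure.restrict_apply_univ]
  -- sum up
  have hsummeas : ∑ v ∈ V, (μ (P v)).toReal ≤ 1 := by
    have h1 : ∑ v ∈ V, μ (P v) = μ (⋃ v ∈ V, P v) :=
      (measure_biUnion_finset hdisj (fun v _ => hPm v)).symm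
    have h2 : μ (⋃ v ∈ V, P v) ≤ 1 := by
      rw [← measure_univ (μ := μ)]
      exact measure_mono (Set.subset_univ _)
    have h3 : (∑ v ∈ V, μ (P v)).toReal ≤ (1 : ENNReal).toReal :=
      ENNReal.toReal_mono (by simp) (h1 ▸ h2)
    rwa [ENNReal.toReal_sum (fun v _ => measure_ne_top μ _), ENNReal.toReal_one] at h3
  show |(∑ v ∈ V, (μ (P v)).toReal * g (fvv N v)) - ∫ y, g y ∂μ| ≤ ε'
  calc |(∑ v ∈ V, (μ (P v)).toReal * g (fvv N v)) - ∫ y, g y ∂μ|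
      = |∑ v ∈ V, ((μ (P v)).toReal * g (fvv N v) - ∫ y in P v, g y ∂μ)| := by
        rw [hdecomp, Finset.sum_sub_distrib]
    _ ≤ ∑ v ∈ V, |(μ (P v)).toReal * g (fvv N v) - ∫ y in P v, g y ∂μ| :=
        Finset.abs_sum_le_sum_abs _ _
    _ ≤ ∑ v ∈ V, ε' * (μ (P v)).toReal := Finset.sum_le_sum hpiece
    _ = ε' * ∑ v ∈ V, (μ (P v)).toReal := by rw [Finset.mul_sum]
    _ ≤ ε' * 1 := by
        apply mul_le_mul_of_nonneg_left hsummeas hε'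
    _ = ε' := mul_one ε'

lemma sum_w_one [Nonempty A] (hn : Fintype.card A ≤ N) (hSc : μ (stdSimplex ℝ A)ᶜ = 0) :
    ∑ v ∈ (univ : Finset (Fin N → A)).image cnt, (μ (rnd N ⁻¹' {fvv N v})).toReal = 1 := by
  have h := disc_close μ hn hSc (fun _ => 1) continuousOn_const le_rfl
    (fun x _ z _ _ => by simp)
  simp only [mul_one] at h
  have h1 : ∫ _y, (1:ℝ) ∂μ = 1 := by simp
  rw [h1] at h
  have h2 := abs_eq_zero.mp (le_antisymm h (abs_nonneg _))
  linarith

end Meas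

section Group
variable {A : Type} [Fintype A] [DecidableEq A] {N : ℕ}

lemma inner_fiber_sum (hN : 0 < N) (w : (A → ℕ) → ℝ) (F : (A → ℝ) → ℝ) (k : Fin N) (a : A)
    (v : A → ℕ) (hv : v ∈ (univ : Finset (Fin N → A)).image cnt) :
    ∑ τ ∈ univ.filter (fun τ : Fin N → A => cnt τ = v),
      (if τ k = a then
        w (cnt τ) / ((univ.filter fun τ' : Fin N → A => cnt τ' = cnt τ).card : ℝ)
          * F (fvv N (cnt τ))
      else 0)
    = w v * fvv N v a * F (fvv N v) := by
  obtain ⟨τ₀, -, hτ₀⟩ := Finset.mem_image.mp hv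
  have hcls : 0 < (univ.filter fun τ' : Fin N → A => cnt τ' = v).card :=
    Finset.card_pos.mpr ⟨τ₀, Finset.mem_filter.mpr ⟨mem_univ _, hτ₀⟩⟩
  set Cv : ℝ := w v / ((univ.filter fun τ' : Fin N → A => cnt τ' = v).card : ℝ) * F (fvv N v)
    with hCv
  have step1 : ∑ τ ∈ univ.filter (fun τ : Fin N → A => cnt τ = v),
      (if τ k = a then
        w (cnt τ) / ((univ.filter fun τ' : Fin N → A => cnt τ' = cnt τ).card : ℝ)
          * F (fvv N (cnt τ))
      else 0)
      = ∑ τ ∈ univ.filter (fun τ : Fin N → A => cnt τ = v), (if τ k = a then Cv else 0) := by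
    apply Finset.sum_congr rfl
    intro τ hτ
    have h2 : cnt τ = v := (Finset.mem_filter.mp hτ).2
    rw [h2]
  rw [step1, ← Finset.sum_filter, Finset.sum_const, Finset.filter_filter, nsmul_eq_mul]
  have hcc := class_count v k a
  have hccR : ((univ.filter fun τ : Fin N → A => cnt τ = v ∧ τ k = a).card : ℝ) * N
      = v a * ((univ.filter fun τ : Fin N → A => cnt τ = v).card : ℝ) := by
    exact_mod_cast hcc
  have hNR : (0:ℝ) < N := by exact_mod_cast hN
  have hclsR : (0:ℝ) < ((univ.filter fun τ' : Fin N → A => cnt τ' = v).card : ℝ) := by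
    exact_mod_cast hcls
  rw [hCv]
  have hcard : ((univ.filter fun τ : Fin N → A => cnt τ = v ∧ τ k = a).card : ℝ)
      = v a * ((univ.filter fun τ : Fin N → A => cnt τ = v).card : ℝ) / N := by
    field_simp
    linarith [hccR]
  rw [hcard]
  have : fvv N v a = (v a : ℝ) / N := rfl
  rw [this]
  field_simp

lemma sum_profiles (hN : 0 < N) (w : (A → ℕ) → ℝ) (F : (A → ℝ) → ℝ) (k : Fin N) (a : A) :
    ∑ τ : Fin N → A,
      (if τ k = a then
        w (cnt τ) / ((univ.filter fun τ' : Fin N → A => cnt τ' = cnt τ).card : ℝ)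
          * F (fvv N (cnt τ))
      else 0)
    = ∑ v ∈ (univ : Finset (Fin N → A)).image cnt, w v * fvv N v a * F (fvv N v) := by
  rw [← Finset.sum_fiberwise_of_maps_to (g := cnt)
    (fun τ _ => Finset.mem_image_of_mem cnt (mem_univ τ))]
  exact Finset.sum_congr rfl fun v hv => inner_fiber_sum hN w F k a v hv

lemma sum_profiles' (w : (A → ℕ) → ℝ) (F : (A → ℝ) → ℝ) :
    ∑ τ : Fin N → A,
      w (cnt τ) / ((univ.filter fun τ' : Fin N → A => cnt τ' = cnt τ).card : ℝ)
        * F (fvv N (cnt τ))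
    = ∑ v ∈ (univ : Finset (Fin N → A)).image cnt, w v * F (fvv N v) := by
  rw [← Finset.sum_fiberwise_of_maps_to (g := cnt)
    (fun τ _ => Finset.mem_image_of_mem cnt (mem_univ τ))]
  apply Finset.sum_congr rfl
  intro v hv
  obtain ⟨τ₀, -, hτ₀⟩ := Finset.mem_image.mp hv
  have hcls : 0 < (univ.filter fun τ' : Fin N → A => cnt τ' = v).card :=
    Finset.card_pos.mpr ⟨τ₀, Finset.mem_filter.mpr ⟨mem_univ _, hτ₀⟩⟩
  have step1 : ∑ τ ∈ univ.filter (fun τ : Fin N → A => cnt τ = v),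
      (w (cnt τ) / ((univ.filter fun τ' : Fin N → A => cnt τ' = cnt τ).card : ℝ)
        * F (fvv N (cnt τ)))
      = ∑ _τ ∈ univ.filter (fun τ : Fin N → A => cnt τ = v),
          (w v / ((univ.filter fun τ' : Fin N → A => cnt τ' = v).card : ℝ) * F (fvv N v)) := by
    apply Finset.sum_congr rfl
    intro τ hτ
    have h2 : cnt τ = v := (Finset.mem_filter.mp hτ).2
    rw [h2]
  rw [step1, Finset.sum_const, nsmul_eq_mul]
  have hclsR : (0:ℝ) < ((univ.filter fun τ' : Fin N → A => cnt τ' = v).card : ℝ) := by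
    exact_mod_cast hcls
  field_simp

end Group

section Helpers
open MeasureTheory
variable {A : Type} [Fintype A] [DecidableEq A]

lemma family_modulus {ι : Type} [Fintype ι] (g : ι → (A → ℝ) → ℝ)
    (hg : ∀ i, ContinuousOn (g i) (stdSimplex ℝ A)) {κ : ℝ} (hκ : 0 < κ) :
    ∃ δ : ℝ, 0 < δ ∧ ∀ i, ∀ x ∈ stdSimplex ℝ A, ∀ z ∈ stdSimplex ℝ A,
      (∀ a, |x a - z a| ≤ δ) → |g i x - g i z| ≤ κ := by
  have key : ∀ i : ι, ∃ δ : ℝ, 0 < δ ∧ ∀ x ∈ stdSimplex ℝ A, ∀ z ∈ stdSimplex ℝ A,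
      (∀ a, |x a - z a| ≤ δ) → |g i x - g i z| ≤ κ := by
    intro i
    have huc : UniformContinuousOn (g i) (stdSimplex ℝ A) :=
      (isCompact_stdSimplex ℝ A).uniformContinuousOn_of_continuous (hg i)
    obtain ⟨δ, hδpos, hδ⟩ := Metric.uniformContinuousOn_iff.mp huc κ hκ
    refine ⟨δ / 2, by linarith, fun x hx z hz hcoord => ?_⟩
    have hdist : dist x z ≤ δ / 2 := by
      rw [dist_pi_le_iff (by linarith)]
      intro a
      rw [Real.dist_eq]
      exact hcoord a
    have := hδ x hx z hz (lt_of_le_of_lt hdist (by linarith))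
    rw [Real.dist_eq] at this
    linarith
  choose D hD using key
  by_cases hι : Nonempty ι
  · refine ⟨univ.inf' (univ_nonempty) D, ?_, ?_⟩
    · rw [Finset.lt_inf'_iff]
      exact fun i _ => (hD i).1
    · intro i x hx z hz hcoord
      refine (hD i).2 x hx z hz fun a => le_trans (hcoord a) ?_
      exact Finset.inf'_le D (mem_univ i)
  · exact ⟨1, one_pos, fun i => absurd ⟨i⟩ hι⟩

lemma exists_cost_bound {Θ : Type} [Fintype Θ] (c : A → (A → ℝ) → Θ → ℝ)
    (hc : ∀ a θ, ContinuousOn (fun y => c a y θ) (stdSimplex ℝ A)) :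
    ∃ M : ℝ, 0 ≤ M ∧ ∀ a θ, ∀ y ∈ stdSimplex ℝ A, |c a y θ| ≤ M := by
  have key : ∀ a θ, ∃ C : ℝ, ∀ y ∈ stdSimplex ℝ A, |c a y θ| ≤ C := by
    intro a θ
    obtain ⟨C, hC⟩ := (isCompact_stdSimplex ℝ A).exists_bound_of_continuousOn (hc a θ)
    exact ⟨C, fun y hy => by simpa [Real.norm_eq_abs] using hC y hy⟩
  choose C hC using key
  refine ⟨∑ a, ∑ θ, max (C a θ) 0, ?_, ?_⟩
  · positivity
  · intro a θ y hy
    calc |c a y θ| ≤ C a θ := hC a θ y hy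
      _ ≤ max (C a θ) 0 := le_max_left _ _
      _ ≤ ∑ θ, max (C a θ) 0 :=
          Finset.single_le_sum (f := fun θ => max (C a θ) 0)
            (fun θ' _ => le_max_right _ _) (mem_univ θ)
      _ ≤ ∑ a, ∑ θ, max (C a θ) 0 :=
          Finset.single_le_sum (f := fun a => ∑ θ, max (C a θ) 0)
            (fun a' _ => by positivity) (mem_univ a)

lemma integrable_dirac' {f : (A → ℝ) → ℝ} (x : A → ℝ) :
    Integrable f (Measure.dirac x) := by
  constructor
  · apply aestronglyMeasurable_const (b := f x) |>.congr
    rw [MeasureTheory.ae_dirac_eq]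
    exact Filter.eventually_pure.mpr rfl
  · rw [HasFiniteIntegral]
    rw [MeasureTheory.lintegral_dirac]
    exact ENNReal.coe_lt_top

lemma integral_dirac_sum {ι : Type} [Fintype ι] (f : (A → ℝ) → ℝ)
    (cwt : ι → ℝ) (hc : ∀ τ, 0 ≤ cwt τ) (x : ι → (A → ℝ)) :
    ∫ y, f y ∂(∑ τ : ι, ENNReal.ofReal (cwt τ) • Measure.dirac (x τ))
      = ∑ τ : ι, cwt τ * f (x τ) := by
  rw [integral_finset_sum_measure (fun τ _ => (integrable_dirac' (x τ)).smul_measure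
    ENNReal.ofReal_ne_top)]
  apply Finset.sum_congr rfl
  intro τ _
  rw [integral_smul_measure, integral_dirac, ENNReal.toReal_ofReal (hc τ), smul_eq_mul]

end Helpers

end AuxForProof

set_option maxHeartbeats 1000000

open MeasureTheory Finset

variable {A Θ : Type} [Fintype A] [DecidableEq A] [Fintype Θ]

/-- The information structure associated with a direct information structure. -/
def DirectInfoStructure.toInfo (I : DirectInfoStructure A Θ) : InfoStructure Θ where
  K := I.K
  instFintypeK := I.instFintypeK
  instDecEqK := I.instDecEqK
  T := fun _ => A
  instFintypeT := fun _ => inferInstanceAs (Fintype A)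
  instDecEqT := fun _ => inferInstanceAs (DecidableEq A)
  γ := I.γ
  γ_pos := I.γ_pos
  γ_sum := I.γ_sum
  π := I.π
  π_nonneg := I.π_nonneg
  π_sum := I.π_sum

/-- The obedient interim flow profile of a direct information structure:
population `k` receiving recommendation `t` puts all its mass `γ k` on action `t`. -/
def DirectInfoStructure.obedient (I : DirectInfoStructure A Θ) :
    ∀ _k : I.K, A → A → ℝ :=
  fun k t a => if t = a then I.γ k else 0

/-- `yhat` is an interim flow profile: nonnegative flows summing to the population sizes. -/
def IsInterim (I : InfoStructure Θ) (yhat : ∀ k, I.T k → A → ℝ) : Prop :=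
  (∀ k t a, 0 ≤ yhat k t a) ∧ ∀ k t, ∑ a, yhat k t a = I.γ k

/-- The interim total flow profile given the type profile `τ`. -/
def totalFlow (I : InfoStructure Θ) (yhat : ∀ k, I.T k → A → ℝ) (τ : ∀ k, I.T k) :
    A → ℝ :=
  fun a => ∑ k, yhat k (τ k) a

/-- The total probability `P(τᵏ)` of type `tk` for population `k`. -/
def typeProb (I : InfoStructure Θ) (p : Θ → ℝ) (k : I.K) (tk : I.T k) : ℝ :=
  ∑ θ, ∑ τ : ∀ j, I.T j, if τ k = tk then p θ * I.π θ τ else 0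

/-- Bayesian Wardrop ε-equilibrium of the basic game `(p, c)` extended with `I`. -/
def IsBWEps (I : InfoStructure Θ) (p : Θ → ℝ) (c : A → (A → ℝ) → Θ → ℝ) (ε : ℝ)
    (yhat : ∀ k, I.T k → A → ℝ) : Prop :=
  IsInterim I yhat ∧
  ∀ (k : I.K) (tk : I.T k), 0 < typeProb I p k tk →
    ∀ a b : A, 0 < yhat k tk a →
      (∑ θ, ∑ τ : ∀ j, I.T j,
        if τ k = tk then
          p θ * I.π θ τ * (c a (totalFlow I yhat τ) θ - c b (totalFlow I yhat τ) θ)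
        else 0)
      ≤ ε * typeProb I p k tk

/-- The outcome (state-dependent distribution over flow profiles) induced by `yhat`. -/
def outcomeMeasure (I : InfoStructure Θ) (yhat : ∀ k, I.T k → A → ℝ) (θ : Θ) :
    Measure (A → ℝ) :=
  ∑ τ : ∀ k, I.T k, ENNReal.ofReal (I.π θ τ) • Measure.dirac (totalFlow I yhat τ)

/-- The probability that the induced outcome puts on the flow profile `z` in state `θ`. -/
def outcomeWeight (I : InfoStructure Θ) (yhat : ∀ k, I.T k → A → ℝ) (θ : Θ)
    (z : A → ℝ) : ℝ :=
  ∑ τ : ∀ k, I.T k, if totalFlow I yhat τ = z then I.π θ τ else 0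

/-- The auxiliary (non-normalized interim) cost `C_a^{k,τᵏ}(yhat)`. -/
def auxCost (I : InfoStructure Θ) (p : Θ → ℝ) (c : A → (A → ℝ) → Θ → ℝ)
    (yhat : ∀ k, I.T k → A → ℝ) (k : I.K) (tk : I.T k) (a : A) : ℝ :=
  ∑ θ, ∑ τ : ∀ j, I.T j,
    if τ k = tk then p θ * I.π θ τ * c a (totalFlow I yhat τ) θ else 0

/-- The potential `Φ_π` of the auxiliary multi-population game. -/
def potPi (I : InfoStructure Θ) (p : Θ → ℝ) (Φ : Θ → (A → ℝ) → ℝ)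
    (yhat : ∀ k, I.T k → A → ℝ) : ℝ :=
  ∑ θ, ∑ τ : ∀ k, I.T k, p θ * I.π θ τ * Φ θ (totalFlow I yhat τ)

/-- The social cost `SC(y, θ) = Σ_a y_a c_a(y, θ)`. -/
def socialCost (c : A → (A → ℝ) → Θ → ℝ) (y : A → ℝ) (θ : Θ) : ℝ :=
  ∑ a, y a * c a y θ

/-- The total cost `TC(yhat)`. -/
def totalCost (I : InfoStructure Θ) (p : Θ → ℝ) (c : A → (A → ℝ) → Θ → ℝ)
    (yhat : ∀ k, I.T k → A → ℝ) : ℝ :=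
  ∑ k, ∑ tk : I.T k, ∑ a, yhat k tk a * auxCost I p c yhat k tk a

/-- An outcome: a state-dependent Borel probability measure supported on the simplex `Y`. -/
def IsOutcome (μ : Θ → Measure (A → ℝ)) : Prop :=
  (∀ θ, IsProbabilityMeasure (μ θ)) ∧ ∀ θ, μ θ (stdSimplex ℝ A)ᶜ = 0

/-- Bayes correlated Wardrop equilibrium of the basic game `(p, c)`. -/
def IsBCWE (p : Θ → ℝ) (c : A → (A → ℝ) → Θ → ℝ) (μ : Θ → Measure (A → ℝ)) : Prop :=
  IsOutcome μ ∧
  ∀ a b : A,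
    ∑ θ, p θ * ∫ y, y a * c a y θ ∂(μ θ) ≤ ∑ θ, p θ * ∫ y, y a * c b y θ ∂(μ θ)

/-- `Φ` is a (state-by-state) potential for the cost profile `c`: for each state it is
continuously differentiable on an open neighborhood of the simplex and its partial
derivative in the direction of each action `a` is the cost of `a`. -/
def IsPotential (c : A → (A → ℝ) → Θ → ℝ) (Φ : Θ → (A → ℝ) → ℝ) : Prop :=
  ∀ θ, ∃ U : Set (A → ℝ), IsOpen U ∧ stdSimplex ℝ A ⊆ U ∧
    ContDiffOn ℝ 1 (Φ θ) U ∧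
    ∀ y ∈ stdSimplex ℝ A, ∀ a, fderiv ℝ (Φ θ) y (Pi.single a 1) = c a y θ

/-- every BCWE can be ε-implemented by a direct information structure
whose obedient interim flow profile is a Bayesian Wardrop ε-equilibrium. -/
theorem partial_implementation
    (p : Θ → ℝ) (hp_pos : ∀ θ, 0 < p θ) (hp_sum : ∑ θ, p θ = 1)
    (c : A → (A → ℝ) → Θ → ℝ)
    (hc : ∀ a θ, ContinuousOn (fun y => c a y θ) (stdSimplex ℝ A))
    (μ : Θ → MeasureTheory.Measure (A → ℝ)) (hμ : IsBCWE p c μ)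
    (ψ : (A → ℝ) → Θ → ℝ)
    (hψ : ∀ θ, ContinuousOn (fun y => ψ y θ) (stdSimplex ℝ A))
    (ε : ℝ) (hε : 0 < ε) :
    ∃ I : DirectInfoStructure A Θ,
      IsBWEps I.toInfo p c ε I.obedient ∧
      ∀ θ, |(∫ y, ψ y θ ∂(μ θ)) -
            ∫ y, ψ y θ ∂(outcomeMeasure I.toInfo I.obedient θ)| ≤ ε := by
  classical
  obtain ⟨⟨hprob, hsupp⟩, hbcwe⟩ := hμ
  haveI : ∀ θ, IsProbabilityMeasure (μ θ) := hprob
  have hΘne : Nonempty Θ := by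
    by_contra h
    rw [not_nonempty_iff] at h
    rw [Finset.univ_eq_empty, Finset.sum_empty] at hp_sum
    exact one_ne_zero hp_sum.symm
  have hAne : Nonempty A := by
    by_contra h
    rw [not_nonempty_iff] at h
    obtain ⟨θ⟩ := hΘne
    have h1 : stdSimplex ℝ A = ∅ := by
      ext y
      simp only [Set.mem_empty_iff_false, iff_false]
      rintro ⟨-, hsum⟩
      rw [Finset.univ_eq_empty, Finset.sum_empty] at hsum
      exact one_ne_zero hsum.symm
    have h2 := hsupp θ
    rw [h1, Set.compl_empty] at h2
    have h3 : (μ θ) Set.univ = 1 := measure_univ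
    rw [h2] at h3
    exact zero_ne_one h3
  haveI := hAne
  set n : ℕ := Fintype.card A with hndef
  have hn1 : 1 ≤ n := Fintype.card_pos
  have hcont_coord : ∀ a : A, ContinuousOn (fun y : A → ℝ => y a) (stdSimplex ℝ A) :=
    fun a => (continuous_apply a).continuousOn
  have hint_coord : ∀ (θ : Θ) (a : A), Integrable (fun y : A → ℝ => y a) (μ θ) :=
    fun θ a => integrable_of_contOn (μ θ) (hsupp θ) (hcont_coord a)
  have hint_ca : ∀ (a b : A) (θ : Θ), Integrable (fun y : A → ℝ => y a * c b y θ) (μ θ) :=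
    fun a b θ => integrable_of_contOn (μ θ) (hsupp θ) ((hcont_coord a).mul (hc b θ))
  obtain ⟨M, hM0, hM⟩ := exists_cost_bound c hc
  set η : A → ℝ := fun a => ∑ θ, p θ * ∫ y, y a ∂(μ θ) with hηdef
  have hηnn : ∀ a, 0 ≤ η a := by
    intro a
    apply Finset.sum_nonneg
    intro θ _
    apply mul_nonneg (hp_pos θ).le
    apply integral_nonneg_of_ae
    filter_upwards [ae_mem_simplex (μ θ) (hsupp θ)] with y hy
    exact hy.1 a
  set Apos : Finset A := univ.filter (fun a => 0 < η a) with hApos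
  set η₀ : ℝ := if h : Apos.Nonempty then Apos.inf' h η else 1 with hη₀def
  have hη₀pos : 0 < η₀ := by
    rw [hη₀def]
    split
    · rw [Finset.lt_inf'_iff]
      intro a ha
      exact (Finset.mem_filter.mp ha).2
    · exact one_pos
  have hη₀le : ∀ a, 0 < η a → η₀ ≤ η a := by
    intro a ha
    have hmem : a ∈ Apos := Finset.mem_filter.mpr ⟨mem_univ a, ha⟩
    rw [hη₀def, dif_pos ⟨a, hmem⟩]
    exact Finset.inf'_le η hmem
  set κ : ℝ := min ε (ε * η₀ / 4) with hκdef
  have hκpos : 0 < κ := lt_min hε (by positivity)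
  obtain ⟨δ, hδpos, hδ⟩ := family_modulus
    (ι := Θ ⊕ A × A × Θ)
    (Sum.elim (fun θ y => ψ y θ) (fun q y => c q.1 y q.2.2 - c q.2.1 y q.2.2))
    (by
      rintro (θ | ⟨a, b, θ⟩)
      · exact hψ θ
      · exact (hc a θ).sub (hc b θ))
    hκpos
  set b0 : ℝ := min δ (min (η₀ / 2) (ε * η₀ / (8 * (M + 1)))) with hb0def
  have hb0pos : 0 < b0 := lt_min hδpos (lt_min (by positivity) (by positivity))
  obtain ⟨N₀, hN₀⟩ := exists_nat_ge (((n : ℝ) + 1) / b0)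
  set N : ℕ := N₀ + n with hNdef
  have hnN : n ≤ N := Nat.le_add_left n N₀
  have hNpos : 0 < N := lt_of_lt_of_le hn1 hnN
  have hNR : (0:ℝ) < N := by exact_mod_cast hNpos
  set δN : ℝ := ((n:ℝ) + 1) / N with hδNdef
  have hδNpos : 0 < δN := by positivity
  have hδNb : δN ≤ b0 := by
    rw [hδNdef, div_le_iff₀ hNR]
    calc (n:ℝ) + 1 = b0 * (((n:ℝ)+1)/b0) := by field_simp
      _ ≤ b0 * N₀ := mul_le_mul_of_nonneg_left hN₀ hb0pos.le
      _ ≤ b0 * N := by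
          apply mul_le_mul_of_nonneg_left _ hb0pos.le
          exact_mod_cast Nat.le_add_right N₀ n
  have hδNδ : δN ≤ δ := le_trans hδNb (min_le_left _ _)
  have hδNη : δN ≤ η₀ / 2 := le_trans hδNb (le_trans (min_le_right _ _) (min_le_left _ _))
  have hδNM : δN ≤ ε * η₀ / (8 * (M + 1)) :=
    le_trans hδNb (le_trans (min_le_right _ _) (min_le_right _ _))
  set w : Θ → (A → ℕ) → ℝ := fun θ v => ((μ θ) (rnd N ⁻¹' {fvv N v})).toReal with hwdef
  have hwnn : ∀ θ v, 0 ≤ w θ v := fun θ v => ENNReal.toReal_nonneg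
  set Dg : Θ → ((A → ℝ) → ℝ) → ℝ :=
    fun θ g => ∑ v ∈ (univ : Finset (Fin N → A)).image cnt, w θ v * g (fvv N v) with hDgdef
  have hD : ∀ (θ : Θ) (g : (A → ℝ) → ℝ), ContinuousOn g (stdSimplex ℝ A) →
      ∀ {ε' : ℝ}, 0 ≤ ε' →
      (∀ x ∈ stdSimplex ℝ A, ∀ z ∈ stdSimplex ℝ A,
        (∀ a, |x a - z a| ≤ ((n : ℝ) + 1) / N) → |g x - g z| ≤ ε') →
      |Dg θ g - ∫ y, g y ∂(μ θ)| ≤ ε' := by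
    intro θ g hg ε' hε' hmod
    exact disc_close (μ θ) hnN (hsupp θ) g hg hε' hmod
  set I : DirectInfoStructure A Θ := {
    K := Fin N
    γ := fun _ => (N:ℝ)⁻¹
    γ_pos := fun _ => by positivity
    γ_sum := by
      rw [Finset.sum_const, Finset.card_univ, Fintype.card_fin, nsmul_eq_mul]
      field_simp
    π := fun θ τ =>
      w θ (cnt τ) / ((univ.filter fun τ' : Fin N → A => cnt τ' = cnt τ).card : ℝ)
    π_nonneg := fun θ τ => div_nonneg (hwnn θ _) (Nat.cast_nonneg _)
    π_sum := fun θ => by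
      have h1 := sum_profiles' (N := N) (w θ) (fun _ => (1:ℝ))
      simp only [mul_one] at h1
      exact h1.trans (sum_w_one (μ θ) hnN (hsupp θ)) } with hIdef
  have hπI : ∀ (θ : Θ) (τ : Fin N → A), I.π θ τ
      = w θ (cnt τ) / ((univ.filter fun τ' : Fin N → A => cnt τ' = cnt τ).card : ℝ) :=
    fun θ τ => rfl
  have hflow : ∀ τ : Fin N → A, totalFlow I.toInfo I.obedient τ = fvv N (cnt τ) := by
    intro τ
    funext a
    show ∑ k : Fin N, (if τ k = a then (N:ℝ)⁻¹ else 0) = (cnt τ a : ℝ) / N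
    rw [← Finset.sum_filter, Finset.sum_const, nsmul_eq_mul, div_eq_mul_inv]
    rfl
  refine ⟨I, ⟨?_, ?_⟩, ?_⟩
  case refine_1 =>
    constructor
    · intro (k : Fin N) (t : A) a
      show (0:ℝ) ≤ if t = a then (N:ℝ)⁻¹ else 0
      split
      · positivity
      · exact le_rfl
    · intro (k : Fin N) (t : A)
      show (∑ a, if t = a then (N:ℝ)⁻¹ else 0) = (N:ℝ)⁻¹
      simp
  case refine_2 =>
    intro (k : Fin N) (tk : A) htpk a b hob
    have hta : tk = a := by
      by_contra hne
      have h0 : I.obedient k tk a = 0 := if_neg hne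
      rw [h0] at hob
      exact lt_irrefl 0 hob
    subst hta
    -- grouping identity
    have hgroup : ∀ (θ : Θ) (F : (A → ℝ) → ℝ),
        (∑ τ : Fin N → A,
          if τ k = tk then p θ * I.π θ τ * F (totalFlow I.toInfo I.obedient τ) else 0)
          = p θ * Dg θ (fun z => z tk * F z) := by
      intro θ F
      have h1 : (∑ τ : Fin N → A,
          if τ k = tk then p θ * I.π θ τ * F (totalFlow I.toInfo I.obedient τ) else 0)
          = p θ * ∑ τ : Fin N → A, (if τ k = tk then
              w θ (cnt τ) / ((univ.filter fun τ' : Fin N → A => cnt τ' = cnt τ).card : ℝ)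
                * F (fvv N (cnt τ)) else 0) := by
        rw [Finset.mul_sum]
        apply Finset.sum_congr rfl
        intro τ _
        rw [hflow τ, hπI θ τ]
        split
        · ring
        · rw [mul_zero]
      rw [h1, sum_profiles hNpos (w θ) F k tk]
      congr 1
      simp only [hDgdef]
      apply Finset.sum_congr rfl
      intro v _
      ring
    have htpval : typeProb I.toInfo p k tk = ∑ θ, p θ * Dg θ (fun z => z tk) := by
      show (∑ θ, ∑ τ : Fin N → A, if τ k = tk then p θ * I.π θ τ else 0) = _
      apply Finset.sum_congr rfl
      intro θ _
      have h0 : (∑ τ : Fin N → A, if τ k = tk then p θ * I.π θ τ else 0)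
          = ∑ τ : Fin N → A, (if τ k = tk then
              p θ * I.π θ τ * (fun _ : A → ℝ => (1:ℝ)) (totalFlow I.toInfo I.obedient τ)
            else 0) := by
        apply Finset.sum_congr rfl
        intro τ _
        split <;> simp
      rw [h0, hgroup θ (fun _ => (1:ℝ))]
      congr 1
      simp only [hDgdef]
      apply Finset.sum_congr rfl
      intro v _
      ring
    set Cf : Θ → (A → ℝ) → ℝ := fun θ z => c tk z θ - c b z θ with hCfdef
    set E : ℝ := 2 * M * δN + κ with hEdef
    have hE0 : 0 ≤ E := by
      have : 0 ≤ 2 * M * δN := mul_nonneg (by linarith) hδNpos.le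
      rw [hEdef]; linarith
    have hEb : E ≤ ε * η₀ / 2 := by
      have h2M : 2 * M * δN ≤ ε * η₀ / 4 := by
        have h1 : 2 * M * δN ≤ 2 * M * (ε * η₀ / (8 * (M + 1))) :=
          mul_le_mul_of_nonneg_left hδNM (by linarith)
        have hMM : M / (M + 1) ≤ 1 := by
          rw [div_le_one (by linarith)]; linarith
        have h2 : 2 * M * (ε * η₀ / (8 * (M + 1))) ≤ ε * η₀ / 4 := by
          calc 2 * M * (ε * η₀ / (8 * (M + 1))) = (M / (M + 1)) * (ε * η₀ / 4) := by
                field_simp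
                ring
            _ ≤ 1 * (ε * η₀ / 4) := by
                apply mul_le_mul_of_nonneg_right hMM (by positivity)
            _ = ε * η₀ / 4 := one_mul _
        linarith
      have hκb : κ ≤ ε * η₀ / 4 := min_le_right _ _
      rw [hEdef]; linarith
    have hmod1 : ∀ (θ : Θ), ∀ x ∈ stdSimplex ℝ A, ∀ z ∈ stdSimplex ℝ A,
        (∀ a', |x a' - z a'| ≤ ((n:ℝ)+1)/N) →
        |x tk * Cf θ x - z tk * Cf θ z| ≤ E := by
      intro θ x hx z hz hco
      have hCx : |Cf θ x| ≤ 2 * M := by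
        calc |Cf θ x| ≤ |c tk x θ| + |c b x θ| := abs_sub (c tk x θ) (c b x θ)
          _ ≤ M + M := add_le_add (hM tk θ x hx) (hM b θ x hx)
          _ = 2 * M := by ring
      have hCC : |Cf θ x - Cf θ z| ≤ κ :=
        hδ (Sum.inr (tk, b, θ)) x hx z hz (fun a' => le_trans (hco a') hδNδ)
      have hz1 : |z tk| ≤ 1 := by
        rw [abs_of_nonneg (hz.1 tk)]
        exact stdSimplex_le_one hz tk
      have hkey : x tk * Cf θ x - z tk * Cf θ z
          = (x tk - z tk) * Cf θ x + z tk * (Cf θ x - Cf θ z) := by ring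
      calc |x tk * Cf θ x - z tk * Cf θ z|
          ≤ |(x tk - z tk) * Cf θ x| + |z tk * (Cf θ x - Cf θ z)| := by
            rw [hkey]; exact abs_add_le _ _
        _ = |x tk - z tk| * |Cf θ x| + |z tk| * |Cf θ x - Cf θ z| := by
            rw [abs_mul, abs_mul]
        _ ≤ δN * (2 * M) + 1 * κ := by
            apply add_le_add
            · exact mul_le_mul (hco tk) hCx (abs_nonneg _) hδNpos.le
            · exact mul_le_mul hz1 hCC (abs_nonneg _) zero_le_one
        _ = E := by rw [hEdef]; ring
    have hθbound : ∀ θ, Dg θ (fun z => z tk * Cf θ z) ≤ (∫ y, y tk * Cf θ y ∂(μ θ)) + E := by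
      intro θ
      have habs := hD θ (fun z => z tk * Cf θ z)
        ((hcont_coord tk).mul ((hc tk θ).sub (hc b θ)))
        hE0 (hmod1 θ)
      linarith [(abs_le.mp habs).2]
    have hLHS : (∑ θ, ∑ τ : Fin N → A,
        if τ k = tk then p θ * I.π θ τ *
          (c tk (totalFlow I.toInfo I.obedient τ) θ - c b (totalFlow I.toInfo I.obedient τ) θ)
        else 0) ≤ ε * η₀ / 2 := by
      have hstep1 : (∑ θ, ∑ τ : Fin N → A,
          if τ k = tk then p θ * I.π θ τ *
            (c tk (totalFlow I.toInfo I.obedient τ) θ - c b (totalFlow I.toInfo I.obedient τ) θ)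
          else 0) = ∑ θ, p θ * Dg θ (fun z => z tk * Cf θ z) :=
        Finset.sum_congr rfl fun θ _ => hgroup θ (Cf θ)
      have hstep2 : ∑ θ, p θ * Dg θ (fun z => z tk * Cf θ z)
          ≤ ∑ θ, p θ * ((∫ y, y tk * Cf θ y ∂(μ θ)) + E) :=
        Finset.sum_le_sum fun θ _ => mul_le_mul_of_nonneg_left (hθbound θ) (hp_pos θ).le
      have hstep3 : ∑ θ, p θ * ((∫ y, y tk * Cf θ y ∂(μ θ)) + E)
          = (∑ θ, p θ * ∫ y, y tk * Cf θ y ∂(μ θ)) + E := by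
        rw [show (∑ θ, p θ * ((∫ y, y tk * Cf θ y ∂(μ θ)) + E))
            = (∑ θ, p θ * ∫ y, y tk * Cf θ y ∂(μ θ)) + (∑ θ, p θ) * E by
          rw [Finset.sum_mul, ← Finset.sum_add_distrib]
          apply Finset.sum_congr rfl
          intro θ _
          ring]
        rw [hp_sum, one_mul]
      have hstep4 : (∑ θ, p θ * ∫ y, y tk * Cf θ y ∂(μ θ)) ≤ 0 := by
        have hint : ∀ θ, ∫ y, y tk * Cf θ y ∂(μ θ)
            = (∫ y, y tk * c tk y θ ∂(μ θ)) - ∫ y, y tk * c b y θ ∂(μ θ) := by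
          intro θ
          rw [show (fun y : A → ℝ => y tk * Cf θ y)
              = fun y => y tk * c tk y θ - y tk * c b y θ from funext fun y => by
            simp only [hCfdef]; ring]
          exact integral_sub (hint_ca tk tk θ) (hint_ca tk b θ)
        have hsum : ∑ θ, p θ * ∫ y, y tk * Cf θ y ∂(μ θ)
            = (∑ θ, p θ * ∫ y, y tk * c tk y θ ∂(μ θ))
              - ∑ θ, p θ * ∫ y, y tk * c b y θ ∂(μ θ) := by
          rw [← Finset.sum_sub_distrib]
          apply Finset.sum_congr rfl
          intro θ _
          rw [hint θ]
          ring
        have hb2 := hbcwe tk b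
        rw [hsum]
        linarith
      rw [hstep1]
      linarith
    rcases (hηnn tk).lt_or_eq with hpos | hzero
    · -- 0 < η tk
      have hG2 : ∀ θ, (∫ y, y tk ∂(μ θ)) - δN ≤ Dg θ (fun z => z tk) := by
        intro θ
        have habs := hD θ (fun z => z tk) (hcont_coord tk) hδNpos.le
          (fun x hx z hz hco => by simpa using hco tk)
        linarith [(abs_le.mp habs).1]
      have htplb : η₀ / 2 ≤ typeProb I.toInfo p k tk := by
        rw [htpval]
        have h1 : ∑ θ, p θ * ((∫ y, y tk ∂(μ θ)) - δN) ≤ ∑ θ, p θ * Dg θ (fun z => z tk) :=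
          Finset.sum_le_sum fun θ _ => mul_le_mul_of_nonneg_left (hG2 θ) (hp_pos θ).le
        have h2 : ∑ θ, p θ * ((∫ y, y tk ∂(μ θ)) - δN) = η tk - δN := by
          rw [show (∑ θ, p θ * ((∫ y, y tk ∂(μ θ)) - δN))
              = (∑ θ, p θ * ∫ y, y tk ∂(μ θ)) - (∑ θ, p θ) * δN by
            rw [Finset.sum_mul, ← Finset.sum_sub_distrib]
            apply Finset.sum_congr rfl
            intro θ _
            ring]
          rw [hp_sum, one_mul]
        have h3 : η₀ ≤ η tk := hη₀le tk hpos
        linarith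
      calc (∑ θ, ∑ τ : Fin N → A,
          if τ k = tk then p θ * I.π θ τ *
            (c tk (totalFlow I.toInfo I.obedient τ) θ - c b (totalFlow I.toInfo I.obedient τ) θ)
          else 0) ≤ ε * η₀ / 2 := hLHS
        _ = ε * (η₀ / 2) := by ring
        _ ≤ ε * typeProb I.toInfo p k tk := mul_le_mul_of_nonneg_left htplb hε.le
    · -- η tk = 0 : contradiction with positive type probability
      exfalso
      have hsum0 : ∑ θ, p θ * ∫ y, y tk ∂(μ θ) = 0 := hzero.symm
      have hterm0 : ∀ θ, ∫ y, y tk ∂(μ θ) = 0 := by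
        intro θ
        have hnn : ∀ θ' ∈ (univ : Finset Θ), 0 ≤ p θ' * ∫ y, y tk ∂(μ θ') := by
          intro θ' _
          apply mul_nonneg (hp_pos θ').le
          apply integral_nonneg_of_ae
          filter_upwards [ae_mem_simplex (μ θ') (hsupp θ')] with y hy
          exact hy.1 tk
        have h0 := (Finset.sum_eq_zero_iff_of_nonneg hnn).mp hsum0 θ (mem_univ θ)
        rcases mul_eq_zero.mp h0 with h | h
        · exact absurd h (ne_of_gt (hp_pos θ))
        · exact h
      have hDg0 : ∀ θ, Dg θ (fun z => z tk) = 0 := by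
        intro θ
        simp only [hDgdef]
        apply Finset.sum_eq_zero
        intro v hv
        rcases eq_or_ne (fvv N v tk) 0 with h | h
        · rw [h, mul_zero]
        · have hnull : (μ θ) (rnd N ⁻¹' {fvv N v}) = 0 := by
            apply measure_mono_null (t := {y : A → ℝ | y tk ≠ 0} ∪ (stdSimplex ℝ A)ᶜ)
            · intro y hy
              by_cases hyS : y ∈ stdSimplex ℝ A
              · left
                intro h0
                apply h
                rw [← Set.mem_singleton_iff.mp hy]
                exact rnd_zero hyS hnN tk h0
              · right; exact hyS
            · apply measure_union_null _ (hsupp θ)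
              have hnn : 0 ≤ᵐ[μ θ] fun y : A → ℝ => y tk := by
                filter_upwards [ae_mem_simplex (μ θ) (hsupp θ)] with y hy
                exact hy.1 tk
              have h1 := (integral_eq_zero_iff_of_nonneg_ae hnn (hint_coord θ tk)).mp
                (hterm0 θ)
              rw [Filter.EventuallyEq, ae_iff] at h1
              simpa using h1
          show w θ v * fvv N v tk = 0
          rw [hwdef]
          dsimp only
          rw [hnull]
          simp
      rw [htpval] at htpk
      simp only [hDg0, mul_zero, Finset.sum_const_zero] at htpk
      exact lt_irrefl 0 htpk
  case refine_3 =>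
    intro θ
    have hout : ∫ y, ψ y θ ∂(outcomeMeasure I.toInfo I.obedient θ) = Dg θ (fun y => ψ y θ) := by
      have h1 : ∫ y, ψ y θ ∂(outcomeMeasure I.toInfo I.obedient θ)
          = ∑ τ : Fin N → A, I.π θ τ * ψ (totalFlow I.toInfo I.obedient τ) θ :=
        integral_dirac_sum (fun y => ψ y θ) (I.π θ) (I.π_nonneg θ)
          (fun τ => totalFlow I.toInfo I.obedient τ)
      rw [h1]
      have h2 : ∑ τ : Fin N → A, I.π θ τ * ψ (totalFlow I.toInfo I.obedient τ) θ
          = ∑ τ : Fin N → A,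
              w θ (cnt τ) / ((univ.filter fun τ' : Fin N → A => cnt τ' = cnt τ).card : ℝ)
                * (fun z => ψ z θ) (fvv N (cnt τ)) := by
        apply Finset.sum_congr rfl
        intro τ _
        rw [hflow τ, hπI θ τ]
      rw [h2, sum_profiles' (w θ) (fun z => ψ z θ)]
    have habs := hD θ (fun y => ψ y θ) (hψ θ) hκpos.le
      (fun x hx z hz hco => hδ (Sum.inl θ) x hx z hz (fun a' => le_trans (hco a') hδNδ))
    rw [hout, abs_sub_comm]
    exact le_trans habs (min_le_left _ _)

end NonatomicGames
end
end

section
/- Let Γ be a basic game and let μ be a Bayes correlated Wardrop equilibrium of Γ whose support is finite and such that every flow profile in the support of every μ(·|θ) has rational coordinates. Then there exists a direct information structure I such that the obedient interim flow profile of I is a Bayesian Wardrop equilibrium (i.e., a Bayesian Wardrop 0-equilibrium) of (Γ, I) and the obedient outcome μ̆_I equals μ. -/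
noncomputable section

namespace NonatomicGames

open MeasureTheory Finset

variable {A Θ : Type} [Fintype A] [DecidableEq A] [Fintype Θ]

section Helpers

lemma meas_decomp {α : Type} [MeasurableSpace α] [MeasurableSingletonClass α]
    (ν : Measure α) (t : Finset α) (h : ν (↑t : Set α)ᶜ = 0) :
    ν = ∑ y ∈ t, ν {y} • Measure.dirac y := by
  classical
  ext s hs
  rw [Measure.coe_finset_sum, Finset.sum_apply]
  simp only [Measure.smul_apply, Measure.dirac_apply' _ hs, smul_eq_mul]
  rw [← measure_inter_conull h]
  have h1 : s ∩ ↑t = ↑(t.filter (· ∈ s)) := by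
    ext x; simp [and_comm]
  rw [h1]
  rw [show (↑(t.filter (· ∈ s)) : Set α) = ⋃ y ∈ t.filter (· ∈ s), ({y} : Set α) by
    ext x; simp]
  rw [measure_biUnion_finset ?_ (fun y _ => measurableSet_singleton y)]
  · rw [Finset.sum_filter]
    apply Finset.sum_congr rfl
    intro y _
    by_cases hy : y ∈ s <;> simp [hy, Set.indicator]
  · intro x hx y hy hxy
    simp [Function.onFun, Set.disjoint_singleton, hxy]

lemma integral_decomp {α : Type} [MeasurableSpace α] [MeasurableSingletonClass α]
    (ν : Measure α) [IsFiniteMeasure ν] (t : Finset α)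
    (h : ν (↑t : Set α)ᶜ = 0) (f : α → ℝ) :
    ∫ x, f x ∂ν = ∑ y ∈ t, (ν {y}).toReal * f y := by
  conv_lhs => rw [meas_decomp ν t h]
  rw [integral_finset_sum_measure]
  · apply Finset.sum_congr rfl
    intro y _
    rw [integral_smul_measure, integral_dirac, smul_eq_mul]
  · intro y _
    apply Integrable.smul_measure ?_ (measure_ne_top ν _)
    have hae : f =ᵐ[Measure.dirac y] (fun _ => f y) := by
      rw [ae_dirac_eq]; simp [Filter.EventuallyEq]
    exact (integrable_congr hae).2 (integrable_const _)

lemma nat_of_dvd (q : ℚ) (N : ℕ) (hd : q.den ∣ N) (hq : 0 ≤ q) :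
    ∃ m : ℕ, (m : ℝ) = N * (q : ℝ) := by
  obtain ⟨d, hdN⟩ := hd
  refine ⟨q.num.toNat * d, ?_⟩
  have hnum : (0:ℤ) ≤ q.num := Rat.num_nonneg.2 hq
  have h2 : (q.num.toNat : ℝ) = (q.num : ℝ) := by exact_mod_cast Int.toNat_of_nonneg hnum
  have h1 : ((q.num : ℝ)) / (q.den : ℝ) = (q : ℝ) := by exact_mod_cast Rat.num_div_den q
  have hden : (q.den : ℝ) ≠ 0 := by positivity
  push_cast [hdN, h2]
  rw [← h1]
  field_simp

lemma exists_assignment {A : Type} [Fintype A] [DecidableEq A] (N : ℕ) (n : A → ℕ)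
    (hsum : ∑ a, n a = N) :
    ∃ f : Fin N → A, ∀ a, (∑ k : Fin N, if f k = a then (1:ℝ) else 0) = n a := by
  have hcard : Fintype.card (Fin N) = Fintype.card (Σ a, Fin (n a)) := by
    simp [Fintype.card_sigma, hsum]
  let e := Fintype.equivOfCardEq hcard
  refine ⟨fun k => (e k).1, fun a => ?_⟩
  rw [Fintype.sum_equiv e _ (fun s => if s.1 = a then (1:ℝ) else 0) (fun x => rfl)]
  rw [← Finset.univ_sigma_univ, Finset.sum_sigma]
  simp [apply_ite Finset.card, apply_ite (Nat.cast : ℕ → ℝ), Finset.sum_ite_eq']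

end Helpers

/-- a BCWE with finite support and rational flows is exactly implemented
by a direct information structure whose obedient profile is a Bayesian Wardrop
equilibrium with obedient outcome equal to the BCWE. -/
theorem partial_implementation_exact
    (p : Θ → ℝ) (hp_pos : ∀ θ, 0 < p θ) (hp_sum : ∑ θ, p θ = 1)
    (c : A → (A → ℝ) → Θ → ℝ)
    (hc : ∀ a θ, ContinuousOn (fun y => c a y θ) (stdSimplex ℝ A))
    (μ : Θ → MeasureTheory.Measure (A → ℝ)) (hμ : IsBCWE p c μ)
    (S : Finset (A → ℝ))
    (hS_rat : ∀ y ∈ S, ∀ a, ∃ q : ℚ, y a = (q : ℝ))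
    (hS_supp : ∀ θ, μ θ ((↑S : Set (A → ℝ))ᶜ) = 0) :
    ∃ I : DirectInfoStructure A Θ,
      IsBWEps I.toInfo p c 0 I.obedient ∧
      ∀ θ, μ θ = outcomeMeasure I.toInfo I.obedient θ := by
  classical
  obtain ⟨⟨hprob, hsimp⟩, hineq⟩ := hμ
  have hΘ : Nonempty Θ := by
    by_contra h
    rw [not_nonempty_iff] at h
    rw [Finset.univ_eq_empty, Finset.sum_empty] at hp_sum
    exact absurd hp_sum (by norm_num)
  set S' : Finset (A → ℝ) := S.filter (· ∈ stdSimplex ℝ A) with hS'def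
  have hS' : ∀ θ, μ θ ((↑S' : Set (A → ℝ))ᶜ) = 0 := by
    intro θ
    refine measure_mono_null ?_ (measure_union_null (hS_supp θ) (hsimp θ))
    intro x hx
    simp only [Set.mem_compl_iff, Set.mem_union, hS'def, Finset.coe_filter,
      Set.mem_setOf_eq] at hx ⊢
    tauto
  have hsimpS' : ∀ y ∈ S', y ∈ stdSimplex ℝ A := fun y hy => (Finset.mem_filter.1 hy).2
  have hμS : ∀ θ, μ θ = ∑ y ∈ S', μ θ {y} • Measure.dirac y :=
    fun θ => meas_decomp (μ θ) S' (hS' θ)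
  set w : Θ → (A → ℝ) → ℝ := fun θ y => (μ θ {y}).toReal with hwdef
  have hw_nonneg : ∀ θ y, 0 ≤ w θ y := fun θ y => ENNReal.toReal_nonneg
  have hw_sum : ∀ θ, ∑ y ∈ S', w θ y = 1 := by
    intro θ
    haveI := hprob θ
    have h1 : (μ θ) Set.univ = 1 := measure_univ
    rw [hμS θ, Measure.coe_finset_sum, Finset.sum_apply] at h1
    simp only [Measure.smul_apply, smul_eq_mul, Measure.dirac_apply' _ MeasurableSet.univ,
      Set.indicator_univ, Pi.one_apply, mul_one] at h1
    have := congrArg ENNReal.toReal h1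
    rw [ENNReal.toReal_sum (fun y _ => measure_ne_top _ _)] at this
    simpa using this
  have hint : ∀ θ (f : (A → ℝ) → ℝ), ∫ y, f y ∂(μ θ) = ∑ y ∈ S', w θ y * f y := by
    intro θ f
    haveI := hprob θ
    exact integral_decomp (μ θ) S' (hS' θ) f
  -- key inequality in weight form
  have hkey : ∀ a b : A,
      ∑ θ, ∑ y ∈ S', p θ * (w θ y * (y a * (c a y θ - c b y θ))) ≤ 0 := by
    intro a b
    have h := hineq a b
    rw [show (∑ θ, p θ * ∫ y, y a * c a y θ ∂(μ θ))
        = ∑ θ, ∑ y ∈ S', p θ * (w θ y * (y a * c a y θ)) from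
      Finset.sum_congr rfl fun θ _ => by rw [hint θ (fun y => y a * c a y θ), Finset.mul_sum]] at h
    rw [show (∑ θ, p θ * ∫ y, y a * c b y θ ∂(μ θ))
        = ∑ θ, ∑ y ∈ S', p θ * (w θ y * (y a * c b y θ)) from
      Finset.sum_congr rfl fun θ _ => by rw [hint θ (fun y => y a * c b y θ), Finset.mul_sum]] at h
    have heq : ∑ θ, ∑ y ∈ S', p θ * (w θ y * (y a * (c a y θ - c b y θ)))
        = (∑ θ, ∑ y ∈ S', p θ * (w θ y * (y a * c a y θ)))
          - ∑ θ, ∑ y ∈ S', p θ * (w θ y * (y a * c b y θ)) := by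
      rw [← Finset.sum_sub_distrib]
      exact Finset.sum_congr rfl fun θ _ => by
        rw [← Finset.sum_sub_distrib]
        exact Finset.sum_congr rfl fun y _ => by ring
    rw [heq]
    linarith
  -- nonemptiness
  have hS'ne : S'.Nonempty := by
    by_contra h
    rw [Finset.not_nonempty_iff_eq_empty] at h
    have := hw_sum (Classical.arbitrary Θ)
    rw [h, Finset.sum_empty] at this
    exact absurd this (by norm_num)
  -- rational structure
  set Q : (A → ℝ) → A → ℚ := fun y a => if h : ∃ q : ℚ, y a = (q : ℝ) then h.choose else 0
    with hQdef
  have hQ : ∀ y ∈ S', ∀ a, y a = ((Q y a : ℚ) : ℝ) := by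
    intro y hy a
    have h := hS_rat y (Finset.mem_filter.1 hy).1 a
    simp only [hQdef, dif_pos h]
    exact h.choose_spec
  set N : ℕ := ∏ y ∈ S', ∏ a, (Q y a).den with hNdef
  have hNpos : 0 < N :=
    Finset.prod_pos fun y _ => Finset.prod_pos fun a _ => (Q y a).pos
  haveI : NeZero N := ⟨hNpos.ne'⟩
  have hNne : (N : ℝ) ≠ 0 := Nat.cast_ne_zero.2 hNpos.ne'
  have hdvd : ∀ y ∈ S', ∀ a, (Q y a).den ∣ N := by
    intro y hy a
    rw [hNdef]
    exact dvd_trans (Finset.dvd_prod_of_mem (fun a => (Q y a).den) (Finset.mem_univ a))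
      (Finset.dvd_prod_of_mem (fun y => ∏ a, (Q y a).den) hy)
  have hex_n : ∀ y ∈ S', ∀ a, ∃ m : ℕ, (m : ℝ) = N * y a := by
    intro y hy a
    have hqn : 0 ≤ Q y a := by
      have := (hsimpS' y hy).1 a
      rw [hQ y hy a] at this
      exact_mod_cast this
    obtain ⟨m, hm⟩ := nat_of_dvd (Q y a) N (hdvd y hy a) hqn
    exact ⟨m, by rw [hm, ← hQ y hy a]⟩
  choose n hn using hex_n
  have hnsum : ∀ y (hy : y ∈ S'), ∑ a, n y hy a = N := by
    intro y hy
    have : ((∑ a, n y hy a : ℕ) : ℝ) = (N : ℝ) := by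
      push_cast
      rw [Finset.sum_congr rfl fun a _ => hn y hy a, ← Finset.mul_sum,
        (hsimpS' y hy).2, mul_one]
    exact_mod_cast this
  have hex_σ : ∀ y (hy : y ∈ S'), ∃ f : Fin N → A,
      ∀ a, (∑ k : Fin N, if f k = a then (1:ℝ) else 0) = n y hy a :=
    fun y hy => exists_assignment N _ (hnsum y hy)
  choose σ hσ using hex_σ
  -- the direct information structure
  set πI : Θ → (Fin N → A) → ℝ := fun θ τ =>
    ∑ y ∈ S'.attach, ∑ j : Fin N,
      w θ y.1 * ((N : ℝ)⁻¹ * (if τ = (fun k => σ y.1 y.2 (k + j)) then 1 else 0))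
    with hπIdef
  have hπ_nonneg : ∀ θ τ, 0 ≤ πI θ τ := by
    intro θ τ
    apply Finset.sum_nonneg; intro y _
    apply Finset.sum_nonneg; intro j _
    apply mul_nonneg (hw_nonneg θ y.1)
    apply mul_nonneg (by positivity)
    split_ifs <;> norm_num
  have hπ_sum : ∀ θ, ∑ τ, πI θ τ = 1 := by
    intro θ
    rw [Finset.sum_comm]
    have h1 : ∀ y ∈ S'.attach, (∑ τ : Fin N → A, ∑ j : Fin N,
        w θ y.1 * ((N : ℝ)⁻¹ * (if τ = (fun k => σ y.1 y.2 (k + j)) then 1 else 0)))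
        = w θ y.1 := by
      intro y _
      rw [Finset.sum_comm]
      have h2 : ∀ j : Fin N, (∑ τ : Fin N → A,
          w θ y.1 * ((N : ℝ)⁻¹ * (if τ = (fun k => σ y.1 y.2 (k + j)) then 1 else 0)))
          = w θ y.1 * (N : ℝ)⁻¹ := by
        intro j
        rw [← Finset.mul_sum]
        simp only [mul_ite, mul_one, mul_zero, Finset.sum_ite_eq', Finset.mem_univ, if_true]
      rw [Finset.sum_congr rfl fun j _ => h2 j, Finset.sum_const, Finset.card_univ,
        Fintype.card_fin, nsmul_eq_mul]
      field_simp
    rw [Finset.sum_congr rfl h1, Finset.sum_attach S' (w θ), hw_sum θ]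
  set I : DirectInfoStructure A Θ :=
    { K := Fin N
      γ := fun _ => (N : ℝ)⁻¹
      γ_pos := fun _ => by positivity
      γ_sum := by
        rw [Finset.sum_const, Finset.card_univ, Fintype.card_fin, nsmul_eq_mul]
        field_simp
      π := πI
      π_nonneg := hπ_nonneg
      π_sum := hπ_sum } with hIdef
  -- total flow of the obedient profile
  have htf : ∀ τ : Fin N → A, totalFlow I.toInfo I.obedient τ
      = fun a => ∑ k : Fin N, (if τ k = a then (N : ℝ)⁻¹ else 0) := by
    intro τ; funext a; rfl
  have htf_shift : ∀ y (hy : y ∈ S') (j : Fin N),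
      totalFlow I.toInfo I.obedient (fun k : Fin N => σ y hy (k + j)) = y := by
    intro y hy j
    rw [htf]
    funext a
    have h1 : (∑ k : Fin N, if σ y hy (k + j) = a then ((N : ℝ))⁻¹ else 0)
        = (N : ℝ)⁻¹ * ∑ k : Fin N, (if σ y hy (k + j) = a then (1:ℝ) else 0) := by
      rw [Finset.mul_sum]
      exact Finset.sum_congr rfl fun k _ => by split_ifs <;> ring
    rw [h1, Fintype.sum_equiv (Equiv.addRight j)
      (fun k => if σ y hy (k + j) = a then (1:ℝ) else 0)
      (fun k => if σ y hy k = a then (1:ℝ) else 0) (fun k => rfl), hσ y hy a, hn y hy a]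
    field_simp
  refine ⟨I, ⟨⟨fun k t a => ?_, fun k t => ?_⟩, ?_⟩, ?_⟩
  · unfold DirectInfoStructure.obedient
    split_ifs
    · exact (I.γ_pos k).le
    · exact le_rfl
  · show (∑ a, if t = a then (N : ℝ)⁻¹ else 0) = (N : ℝ)⁻¹
    simp [Finset.sum_ite_eq]
  · -- obedience
    intro k0 tk0 htp a b hpos
    let k : Fin N := k0
    let tk : A := tk0
    have hpos' : 0 < (if tk = a then (N : ℝ)⁻¹ else 0) := hpos
    have ha : tk = a := by
      by_contra h
      rw [if_neg h] at hpos'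
      exact lt_irrefl _ hpos'
    show (∑ θ, ∑ τ : Fin N → A, if τ k = tk then
        p θ * InfoStructure.π I.toInfo θ τ *
          (c a (totalFlow I.toInfo I.obedient τ) θ - c b (totalFlow I.toInfo I.obedient τ) θ)
        else 0) ≤ 0 * typeProb I.toInfo p k0 tk0
    rw [← ha, zero_mul]
    have hstep : ∀ θ, (∑ τ : Fin N → A, if τ k = tk then
        p θ * InfoStructure.π I.toInfo θ τ *
          (c tk (totalFlow I.toInfo I.obedient τ) θ - c b (totalFlow I.toInfo I.obedient τ) θ)
        else 0)
        = ∑ y ∈ S'.attach, p θ * (w θ y.1 * (y.1 tk * (c tk y.1 θ - c b y.1 θ))) := by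
      intro θ
      have hexpand : ∀ τ : Fin N → A, (if τ k = tk then
          p θ * InfoStructure.π I.toInfo θ τ *
            (c tk (totalFlow I.toInfo I.obedient τ) θ - c b (totalFlow I.toInfo I.obedient τ) θ)
          else 0)
          = ∑ y ∈ S'.attach, ∑ j : Fin N,
            (if τ = (fun k' => σ y.1 y.2 (k' + j)) then
              (if σ y.1 y.2 (k + j) = tk then
                p θ * (w θ y.1 * (N : ℝ)⁻¹) * (c tk y.1 θ - c b y.1 θ)
              else 0) else 0) := by
        intro τ
        have hπτ : InfoStructure.π I.toInfo θ τ = πI θ τ := rfl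
        rw [hπτ]
        by_cases hτk : τ k = tk
        · rw [if_pos hτk]
          simp only [hπIdef, Finset.sum_mul, Finset.mul_sum]
          apply Finset.sum_congr rfl; intro y _
          apply Finset.sum_congr rfl; intro j _
          by_cases hτ : τ = (fun k' => σ y.1 y.2 (k' + j))
          · subst hτ
            have hk2 : σ y.1 y.2 (k + j) = tk := hτk
            rw [htf_shift y.1 y.2 j]
            simp only [if_pos rfl, if_pos hk2, if_true]
            ring
          · simp only [if_neg hτ]; ring
        · rw [if_neg hτk]
          symm
          apply Finset.sum_eq_zero; intro y _
          apply Finset.sum_eq_zero; intro j _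
          by_cases hτ : τ = (fun k' => σ y.1 y.2 (k' + j))
          · subst hτ
            have hk2 : ¬ σ y.1 y.2 (k + j) = tk := hτk
            simp only [if_pos rfl, if_neg hk2, if_true]
          · simp only [if_neg hτ]
      rw [Finset.sum_congr rfl fun τ _ => hexpand τ, Finset.sum_comm]
      apply Finset.sum_congr rfl; intro y _
      rw [Finset.sum_comm]
      have hj : ∀ j : Fin N, (∑ τ : Fin N → A,
          if τ = (fun k' => σ y.1 y.2 (k' + j)) then
            (if σ y.1 y.2 (k + j) = tk then
              p θ * (w θ y.1 * (N : ℝ)⁻¹) * (c tk y.1 θ - c b y.1 θ)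
            else 0) else 0)
          = (if σ y.1 y.2 (k + j) = tk then (1:ℝ) else 0) *
            (p θ * (w θ y.1 * (N : ℝ)⁻¹) * (c tk y.1 θ - c b y.1 θ)) := by
        intro j
        rw [Finset.sum_ite_eq', if_pos (Finset.mem_univ _)]
        split_ifs <;> ring
      rw [Finset.sum_congr rfl fun j _ => hj j, ← Finset.sum_mul]
      rw [Fintype.sum_equiv (Equiv.addLeft k)
        (fun j => if σ y.1 y.2 (k + j) = tk then (1:ℝ) else 0)
        (fun j => if σ y.1 y.2 j = tk then (1:ℝ) else 0) (fun j => rfl)]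
      rw [hσ y.1 y.2 tk, hn y.1 y.2 tk]
      field_simp
    rw [Finset.sum_congr rfl fun θ _ => hstep θ]
    calc ∑ θ, ∑ y ∈ S'.attach, p θ * (w θ y.1 * (y.1 tk * (c tk y.1 θ - c b y.1 θ)))
        = ∑ θ, ∑ y ∈ S', p θ * (w θ y * (y tk * (c tk y θ - c b y θ))) := by
          apply Finset.sum_congr rfl; intro θ _
          exact Finset.sum_attach S' fun y => p θ * (w θ y * (y tk * (c tk y θ - c b y θ)))
      _ ≤ 0 := hkey tk b
  · -- outcome equality
    intro θ
    show μ θ = ∑ τ : Fin N → A, ENNReal.ofReal (InfoStructure.π I.toInfo θ τ) •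
      Measure.dirac (totalFlow I.toInfo I.obedient τ)
    rw [hμS θ]
    have hof : ∀ τ : Fin N → A, ENNReal.ofReal (InfoStructure.π I.toInfo θ τ)
        = ∑ y ∈ S'.attach, ∑ j : Fin N,
          (if τ = (fun k => σ y.1 y.2 (k + j)) then
            ENNReal.ofReal (w θ y.1 * (N : ℝ)⁻¹) else 0) := by
      intro τ
      have hπτ : InfoStructure.π I.toInfo θ τ = πI θ τ := rfl
      rw [hπτ]
      simp only [hπIdef]
      rw [ENNReal.ofReal_sum_of_nonneg (fun y _ => Finset.sum_nonneg fun j _ =>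
        mul_nonneg (hw_nonneg θ y.1) (mul_nonneg (by positivity) (by split_ifs <;> norm_num)))]
      apply Finset.sum_congr rfl; intro y _
      rw [ENNReal.ofReal_sum_of_nonneg (fun j _ =>
        mul_nonneg (hw_nonneg θ y.1) (mul_nonneg (by positivity) (by split_ifs <;> norm_num)))]
      apply Finset.sum_congr rfl; intro j _
      split_ifs
      · rw [mul_one]
      · rw [mul_zero, mul_zero, ENNReal.ofReal_zero]
    have h1 : (∑ τ : Fin N → A, ENNReal.ofReal (InfoStructure.π I.toInfo θ τ) •
          Measure.dirac (totalFlow I.toInfo I.obedient τ))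
        = ∑ y ∈ S'.attach, ∑ j : Fin N, ∑ τ : Fin N → A,
          ((if τ = (fun k => σ y.1 y.2 (k + j)) then
            ENNReal.ofReal (w θ y.1 * (N : ℝ)⁻¹) else 0) •
            Measure.dirac (totalFlow I.toInfo I.obedient τ)) := by
      have hterm : ∀ τ : Fin N → A, (ENNReal.ofReal (InfoStructure.π I.toInfo θ τ) •
            Measure.dirac (totalFlow I.toInfo I.obedient τ))
          = ∑ y ∈ S'.attach, ∑ j : Fin N,
            ((if τ = (fun k => σ y.1 y.2 (k + j)) then
              ENNReal.ofReal (w θ y.1 * (N : ℝ)⁻¹) else 0) •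
              Measure.dirac (totalFlow I.toInfo I.obedient τ)) := by
        intro τ
        rw [hof τ, Finset.sum_smul]
        exact Finset.sum_congr rfl fun y _ => Finset.sum_smul
      rw [Finset.sum_congr rfl fun τ _ => hterm τ, Finset.sum_comm]
      exact Finset.sum_congr rfl fun y _ => Finset.sum_comm
    rw [h1]
    have h2 : ∀ (y : {x // x ∈ S'}) (j : Fin N), (∑ τ : Fin N → A,
        ((if τ = (fun k => σ y.1 y.2 (k + j)) then
          ENNReal.ofReal (w θ y.1 * (N : ℝ)⁻¹) else 0) •
          Measure.dirac (totalFlow I.toInfo I.obedient τ)))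
        = ENNReal.ofReal (w θ y.1 * (N : ℝ)⁻¹) • Measure.dirac (y.1 : A → ℝ) := by
      intro y j
      have hterm : ∀ τ : Fin N → A, ((if τ = (fun k => σ y.1 y.2 (k + j)) then
          ENNReal.ofReal (w θ y.1 * (N : ℝ)⁻¹) else 0) •
          Measure.dirac (totalFlow I.toInfo I.obedient τ))
          = (if τ = (fun k => σ y.1 y.2 (k + j)) then
            ENNReal.ofReal (w θ y.1 * (N : ℝ)⁻¹) • Measure.dirac (y.1 : A → ℝ) else 0) := by
        intro τ
        split_ifs with hτ
        · rw [hτ, htf_shift y.1 y.2 j]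
        · rw [zero_smul]
      rw [Finset.sum_congr rfl fun τ _ => hterm τ, Finset.sum_ite_eq',
        if_pos (Finset.mem_univ _)]
    rw [Finset.sum_congr rfl fun y _ => Finset.sum_congr rfl fun j _ => h2 y j]
    have h3 : ∀ y : {x // x ∈ S'}, (∑ _j : Fin N,
        ENNReal.ofReal (w θ y.1 * (N : ℝ)⁻¹) • Measure.dirac (y.1 : A → ℝ))
        = μ θ {y.1} • Measure.dirac (y.1 : A → ℝ) := by
      intro y
      rw [Finset.sum_const, Finset.card_univ, Fintype.card_fin, ← smul_assoc]
      congr 1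
      rw [nsmul_eq_mul]
      rw [← ENNReal.ofReal_natCast N, ← ENNReal.ofReal_mul (by positivity)]
      rw [show (N : ℝ) * (w θ y.1 * (N : ℝ)⁻¹) = w θ y.1 by field_simp]
      exact ENNReal.ofReal_toReal (measure_ne_top _ _)
    rw [Finset.sum_congr rfl fun y _ => h3 y]
    rw [← Finset.sum_attach S' (fun y => μ θ {y} • Measure.dirac y)]

end NonatomicGames
end
end

section
/- Let Γ be a basic game that has a strictly convex potential in each state (i.e., for each θ the potential Φ_θ is strictly convex). Then for every information structure I there is a unique Bayesian Wardrop equilibrium outcome of (Γ, I): any two Bayesian Wardrop equilibria ŷ and ŷ′ of (Γ, I) induce the same outcome, i.e., for every θ ∈ Θ and every z ∈ Y, Σ_{τ : y(τ) = z} π(τ|θ) = Σ_{τ : y′(τ) = z} π(τ|θ). -/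
noncomputable section

namespace NonatomicGames

open MeasureTheory Finset

variable {A Θ : Type} [Fintype A] [DecidableEq A] [Fintype Θ]

/-! ### Auxiliary lemmas -/

lemma pi_single_decomp (v : A → ℝ) : ∑ a, v a • (Pi.single a 1 : A → ℝ) = v := by
  funext b
  rw [Finset.sum_apply]
  simp [Pi.single_apply]

lemma hasFDerivAt_of_potential {c : A → (A → ℝ) → Θ → ℝ} {Φ : Θ → (A → ℝ) → ℝ}
    (hΦ : IsPotential c Φ) (θ : Θ) {x : A → ℝ} (hx : x ∈ stdSimplex ℝ A) :
    HasFDerivAt (Φ θ) (fderiv ℝ (Φ θ) x) x := by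
  obtain ⟨U, hUo, hUS, hcd, -⟩ := hΦ θ
  exact ((hcd.contDiffAt (hUo.mem_nhds (hUS hx))).differentiableAt one_ne_zero).hasFDerivAt

lemma fderiv_apply_of_potential {c : A → (A → ℝ) → Θ → ℝ} {Φ : Θ → (A → ℝ) → ℝ}
    (hΦ : IsPotential c Φ) (θ : Θ) {x : A → ℝ} (hx : x ∈ stdSimplex ℝ A) (v : A → ℝ) :
    fderiv ℝ (Φ θ) x v = ∑ a, v a * c a x θ := by
  obtain ⟨U, hUo, hUS, hcd, hder⟩ := hΦ θ
  conv_lhs => rw [← pi_single_decomp v]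
  rw [map_sum]
  refine Finset.sum_congr rfl fun a _ => ?_
  rw [ContinuousLinearMap.map_smul, hder x hx a]
  simp [smul_eq_mul]

lemma grad_ineq {f : (A → ℝ) → ℝ} {L : (A → ℝ) →L[ℝ] ℝ}
    (hconv : ConvexOn ℝ (stdSimplex ℝ A) f) {x z : A → ℝ}
    (hx : x ∈ stdSimplex ℝ A) (hz : z ∈ stdSimplex ℝ A)
    (hdf : HasFDerivAt f L x) :
    f x + L (z - x) ≤ f z := by
  set g : ℝ → ℝ := fun t => f (AffineMap.lineMap x z t) with hg
  have hgconv : ConvexOn ℝ (Set.Icc (0 : ℝ) 1) g := by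
    refine (hconv.comp_affineMap (AffineMap.lineMap x z)).subset ?_ (convex_Icc 0 1)
    intro t ht
    have : AffineMap.lineMap x z t ∈ segment ℝ x z := by
      rw [segment_eq_image_lineMap]; exact ⟨t, ht, rfl⟩
    exact hconv.1.segment_subset hx hz this
  have hline : HasDerivAt (fun t : ℝ => AffineMap.lineMap x z t) (z - x) 0 := by
    simp_rw [AffineMap.lineMap_apply_module']
    simpa using ((hasDerivAt_id (0 : ℝ)).smul_const (z - x)).add_const x
  have hg0 : HasDerivAt g (L (z - x)) 0 := by
    have hfd : HasFDerivAt f L (AffineMap.lineMap x z (0 : ℝ)) := by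
      rwa [AffineMap.lineMap_apply_zero]
    exact hfd.comp_hasDerivAt 0 hline
  have hslope := hgconv.le_slope_of_hasDerivAt (Set.left_mem_Icc.2 zero_le_one)
    (Set.right_mem_Icc.2 zero_le_one) zero_lt_one hg0
  rw [slope_def_field] at hslope
  have hg1 : g 1 = f z := by rw [hg]; simp
  have hg00 : g 0 = f x := by rw [hg]; simp
  rw [hg1, hg00] at hslope
  have : L (z - x) ≤ f z - f x := by
    have h1 : (f z - f x) / (1 - 0 : ℝ) = f z - f x := by norm_num
    linarith [hslope, h1.symm ▸ hslope]
  linarith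

lemma grad_strict {f : (A → ℝ) → ℝ} {Lx Lz : (A → ℝ) →L[ℝ] ℝ}
    (hconv : StrictConvexOn ℝ (stdSimplex ℝ A) f) {x z : A → ℝ}
    (hx : x ∈ stdSimplex ℝ A) (hz : z ∈ stdSimplex ℝ A) (hne : x ≠ z)
    (hdx : HasFDerivAt f Lx x) (hdz : HasFDerivAt f Lz z) :
    Lx (z - x) + Lz (x - z) < 0 := by
  have hmem : (2⁻¹ : ℝ) • x + (2⁻¹ : ℝ) • z ∈ stdSimplex ℝ A :=
    hconv.1 hx hz (by norm_num) (by norm_num) (by norm_num)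
  have hflt : f ((2⁻¹ : ℝ) • x + (2⁻¹ : ℝ) • z) < (2⁻¹ : ℝ) * f x + (2⁻¹ : ℝ) * f z := by
    have := hconv.2 hx hz hne (by norm_num : (0:ℝ) < 2⁻¹) (by norm_num : (0:ℝ) < 2⁻¹)
      (by norm_num)
    simpa [smul_eq_mul] using this
  have hmx : ((2⁻¹ : ℝ) • x + (2⁻¹ : ℝ) • z) - x = (2⁻¹ : ℝ) • (z - x) := by module
  have hmz : ((2⁻¹ : ℝ) • x + (2⁻¹ : ℝ) • z) - z = (2⁻¹ : ℝ) • (x - z) := by module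
  have h1 : f x + Lx (((2⁻¹ : ℝ) • x + (2⁻¹ : ℝ) • z) - x) ≤ f ((2⁻¹ : ℝ) • x + (2⁻¹ : ℝ) • z) :=
    grad_ineq hconv.convexOn hx hmem hdx
  have h2 : f z + Lz (((2⁻¹ : ℝ) • x + (2⁻¹ : ℝ) • z) - z) ≤ f ((2⁻¹ : ℝ) • x + (2⁻¹ : ℝ) • z) :=
    grad_ineq hconv.convexOn hz hmem hdz
  rw [hmx, ContinuousLinearMap.map_smul, smul_eq_mul] at h1
  rw [hmz, ContinuousLinearMap.map_smul, smul_eq_mul] at h2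
  linarith

lemma key_lt {c : A → (A → ℝ) → Θ → ℝ} {Φ : Θ → (A → ℝ) → ℝ}
    (hΦ : IsPotential c Φ) (hconv : ∀ θ, StrictConvexOn ℝ (stdSimplex ℝ A) (Φ θ))
    (θ : Θ) {x z : A → ℝ} (hx : x ∈ stdSimplex ℝ A) (hz : z ∈ stdSimplex ℝ A)
    (hne : x ≠ z) :
    (∑ a, (z a - x a) * c a x θ) + (∑ a, (x a - z a) * c a z θ) < 0 := by
  have hdx := hasFDerivAt_of_potential hΦ θ hx
  have hdz := hasFDerivAt_of_potential hΦ θ hz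
  have h := grad_strict (hconv θ) hx hz hne hdx hdz
  rw [fderiv_apply_of_potential hΦ θ hx, fderiv_apply_of_potential hΦ θ hz] at h
  simpa [Pi.sub_apply] using h

lemma typeProb_nonneg {I : InfoStructure Θ} {p : Θ → ℝ} (hp_pos : ∀ θ, 0 < p θ)
    (k : I.K) (tk : I.T k) : 0 ≤ typeProb I p k tk := by
  refine Finset.sum_nonneg fun θ _ => Finset.sum_nonneg fun τ _ => ?_
  split_ifs
  · exact mul_nonneg (hp_pos θ).le (I.π_nonneg θ τ)
  · exact le_refl 0

lemma totalFlow_mem_simplex {I : InfoStructure Θ} {yhat : ∀ k, I.T k → A → ℝ}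
    (hy : IsInterim I yhat) (τ : ∀ k, I.T k) :
    totalFlow I yhat τ ∈ stdSimplex ℝ A := by
  constructor
  · intro a
    exact Finset.sum_nonneg fun k _ => hy.1 k (τ k) a
  · show ∑ a, ∑ k, yhat k (τ k) a = 1
    rw [Finset.sum_comm]
    calc ∑ k, ∑ a, yhat k (τ k) a = ∑ k, I.γ k :=
          Finset.sum_congr rfl fun k _ => hy.2 k (τ k)
      _ = 1 := I.γ_sum

/-- First-order condition: at a Bayesian Wardrop equilibrium, the directional
derivative of the potential towards any other interim profile is nonnegative. -/
lemma FOC {I : InfoStructure Θ} {p : Θ → ℝ} (hp_pos : ∀ θ, 0 < p θ)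
    {c : A → (A → ℝ) → Θ → ℝ} {yhat zhat : ∀ k, I.T k → A → ℝ}
    (h : IsBWEps I p c 0 yhat) (hz : IsInterim I zhat) :
    0 ≤ ∑ θ, ∑ τ : ∀ k, I.T k, p θ * I.π θ τ *
        (∑ a, (totalFlow I zhat τ a - totalFlow I yhat τ a) * c a (totalFlow I yhat τ) θ) := by
  obtain ⟨⟨hy_nonneg, hy_sum⟩, hopt⟩ := h
  obtain ⟨hz_nonneg, hz_sum⟩ := hz
  -- difference of auxiliary costs as the BWE sum
  have hdiffcost : ∀ (k : I.K) (tk : I.T k) (a b : A),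
      (∑ θ, ∑ τ : ∀ j, I.T j, if τ k = tk then
          p θ * I.π θ τ * (c a (totalFlow I yhat τ) θ - c b (totalFlow I yhat τ) θ) else 0)
        = auxCost I p c yhat k tk a - auxCost I p c yhat k tk b := by
    intro k tk a b
    rw [auxCost, auxCost, ← Finset.sum_sub_distrib]
    refine Finset.sum_congr rfl fun θ _ => ?_
    rw [← Finset.sum_sub_distrib]
    refine Finset.sum_congr rfl fun τ _ => ?_
    split_ifs with hτ
    · ring
    · ring
  -- if a type has zero probability then all its auxiliary costs vanish
  have haux0 : ∀ (k : I.K) (tk : I.T k), typeProb I p k tk = 0 →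
      ∀ a, auxCost I p c yhat k tk a = 0 := by
    intro k tk h0 a
    rw [auxCost]
    refine Finset.sum_eq_zero fun θ _ => Finset.sum_eq_zero fun τ _ => ?_
    by_cases hτ : τ k = tk
    · have hπ : I.π θ τ = 0 := by
        by_contra hne
        have hπpos : 0 < I.π θ τ := lt_of_le_of_ne (I.π_nonneg θ τ) (Ne.symm hne)
        have hpos : 0 < typeProb I p k tk := by
          rw [typeProb]
          refine Finset.sum_pos'
            (fun θ' _ => Finset.sum_nonneg fun τ' _ => ?_) ⟨θ, Finset.mem_univ θ, ?_⟩
          · split_ifs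
            · exact mul_nonneg (hp_pos θ').le (I.π_nonneg θ' τ')
            · exact le_refl 0
          · refine Finset.sum_pos' (fun τ' _ => ?_) ⟨τ, Finset.mem_univ τ, ?_⟩
            · split_ifs
              · exact mul_nonneg (hp_pos θ).le (I.π_nonneg θ τ')
              · exact le_refl 0
            · rw [if_pos hτ]
              exact mul_pos (hp_pos θ) hπpos
        exact absurd h0 (ne_of_gt hpos)
      simp [hτ, hπ]
    · simp [hτ]
  -- per-(k, tk) inequality
  have hkey : ∀ (k : I.K) (tk : I.T k),
      0 ≤ ∑ a, (zhat k tk a - yhat k tk a) * auxCost I p c yhat k tk a := by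
    intro k tk
    rcases eq_or_lt_of_le (typeProb_nonneg hp_pos k tk) with h0 | hpos
    · refine le_of_eq (Finset.sum_eq_zero fun a _ => ?_).symm
      rw [haux0 k tk h0.symm a, mul_zero]
    · obtain ⟨a0, ha0⟩ : ∃ a, 0 < yhat k tk a := by
        by_contra hcon
        push_neg at hcon
        have hzero : ∑ a, yhat k tk a = 0 :=
          Finset.sum_eq_zero fun a _ => le_antisymm (hcon a) (hy_nonneg k tk a)
        rw [hy_sum k tk] at hzero
        exact absurd hzero (ne_of_gt (I.γ_pos k))
      set m := auxCost I p c yhat k tk a0 with hm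
      have hmin : ∀ a, m ≤ auxCost I p c yhat k tk a := by
        intro a
        have h1 := hopt k tk hpos a0 a ha0
        rw [hdiffcost k tk a0 a, zero_mul] at h1
        linarith
      have hsupp : ∀ a, 0 < yhat k tk a → auxCost I p c yhat k tk a = m := by
        intro a ha
        have h1 := hopt k tk hpos a a0 ha
        rw [hdiffcost k tk a a0, zero_mul] at h1
        have := hmin a
        linarith
      have hyaux : ∑ a, yhat k tk a * auxCost I p c yhat k tk a = I.γ k * m := by
        rw [← hy_sum k tk, Finset.sum_mul]
        refine Finset.sum_congr rfl fun a _ => ?_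
        rcases eq_or_lt_of_le (hy_nonneg k tk a) with hz0 | hz0
        · rw [← hz0, zero_mul, zero_mul]
        · rw [hsupp a hz0]
      have hzaux : I.γ k * m ≤ ∑ a, zhat k tk a * auxCost I p c yhat k tk a := by
        calc I.γ k * m = ∑ a, zhat k tk a * m := by rw [← Finset.sum_mul, hz_sum k tk]
          _ ≤ _ := Finset.sum_le_sum fun a _ =>
                mul_le_mul_of_nonneg_left (hmin a) (hz_nonneg k tk a)
      have hsplit : ∑ a, (zhat k tk a - yhat k tk a) * auxCost I p c yhat k tk a
          = (∑ a, zhat k tk a * auxCost I p c yhat k tk a)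
            - ∑ a, yhat k tk a * auxCost I p c yhat k tk a := by
        rw [← Finset.sum_sub_distrib]
        exact Finset.sum_congr rfl fun a _ => by ring
      rw [hsplit, hyaux]
      linarith
  -- rearrangement of the big sum
  have hE : ∑ θ, ∑ τ : ∀ k, I.T k, p θ * I.π θ τ *
        (∑ a, (totalFlow I zhat τ a - totalFlow I yhat τ a) * c a (totalFlow I yhat τ) θ)
      = ∑ k, ∑ tk : I.T k, ∑ a,
          (zhat k tk a - yhat k tk a) * auxCost I p c yhat k tk a := by
    have hLHS : ∑ θ, ∑ τ : ∀ k, I.T k, p θ * I.π θ τ *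
          (∑ a, (totalFlow I zhat τ a - totalFlow I yhat τ a) * c a (totalFlow I yhat τ) θ)
        = ∑ k, ∑ τ : ∀ j, I.T j, ∑ a, ∑ θ,
            (zhat k (τ k) a - yhat k (τ k) a)
              * (p θ * I.π θ τ * c a (totalFlow I yhat τ) θ) := by
      have step1 : ∀ θ (τ : ∀ j, I.T j),
          p θ * I.π θ τ *
            (∑ a, (totalFlow I zhat τ a - totalFlow I yhat τ a) * c a (totalFlow I yhat τ) θ)
          = ∑ k, ∑ a, (zhat k (τ k) a - yhat k (τ k) a)
              * (p θ * I.π θ τ * c a (totalFlow I yhat τ) θ) := by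
        intro θ τ
        have hdiff : ∀ a, totalFlow I zhat τ a - totalFlow I yhat τ a
            = ∑ k, (zhat k (τ k) a - yhat k (τ k) a) := by
          intro a
          rw [totalFlow, totalFlow, ← Finset.sum_sub_distrib]
        rw [Finset.mul_sum, Finset.sum_comm]
        refine Finset.sum_congr rfl fun a _ => ?_
        rw [hdiff a, Finset.sum_mul, Finset.mul_sum]
        exact Finset.sum_congr rfl fun k _ => by ring
      simp_rw [step1]
      calc ∑ θ, ∑ τ : ∀ j, I.T j, ∑ k, ∑ a, (zhat k (τ k) a - yhat k (τ k) a)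
              * (p θ * I.π θ τ * c a (totalFlow I yhat τ) θ)
          = ∑ τ : ∀ j, I.T j, ∑ θ, ∑ k, ∑ a, (zhat k (τ k) a - yhat k (τ k) a)
              * (p θ * I.π θ τ * c a (totalFlow I yhat τ) θ) := Finset.sum_comm
        _ = ∑ τ : ∀ j, I.T j, ∑ k, ∑ θ, ∑ a, (zhat k (τ k) a - yhat k (τ k) a)
              * (p θ * I.π θ τ * c a (totalFlow I yhat τ) θ) :=
            Finset.sum_congr rfl fun τ _ => Finset.sum_comm
        _ = ∑ τ : ∀ j, I.T j, ∑ k, ∑ a, ∑ θ, (zhat k (τ k) a - yhat k (τ k) a)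
              * (p θ * I.π θ τ * c a (totalFlow I yhat τ) θ) :=
            Finset.sum_congr rfl fun τ _ => Finset.sum_congr rfl fun k _ => Finset.sum_comm
        _ = ∑ k, ∑ τ : ∀ j, I.T j, ∑ a, ∑ θ, (zhat k (τ k) a - yhat k (τ k) a)
              * (p θ * I.π θ τ * c a (totalFlow I yhat τ) θ) := Finset.sum_comm
    rw [hLHS]
    refine Finset.sum_congr rfl fun k _ => ?_
    -- now handle population k: group the τ-sum by the value of τ k
    have hGroup : ∀ G : I.T k → (∀ j, I.T j) → ℝ,
        ∑ tk : I.T k, ∑ τ : ∀ j, I.T j, (if τ k = tk then G tk τ else 0)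
          = ∑ τ : ∀ j, I.T j, G (τ k) τ := by
      intro G
      rw [Finset.sum_comm]
      refine Finset.sum_congr rfl fun τ _ => ?_
      rw [Finset.sum_ite_eq Finset.univ (τ k) fun tk => G tk τ, if_pos (Finset.mem_univ _)]
    have hRHS : ∑ tk : I.T k, ∑ a,
          (zhat k tk a - yhat k tk a) * auxCost I p c yhat k tk a
        = ∑ tk : I.T k, ∑ τ : ∀ j, I.T j, if τ k = tk then
            ∑ a, ∑ θ, (zhat k tk a - yhat k tk a)
              * (p θ * I.π θ τ * c a (totalFlow I yhat τ) θ) else 0 := by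
      refine Finset.sum_congr rfl fun tk _ => ?_
      have expand : ∑ a, (zhat k tk a - yhat k tk a) * auxCost I p c yhat k tk a
          = ∑ a, ∑ θ, ∑ τ : ∀ j, I.T j, if τ k = tk then
              (zhat k tk a - yhat k tk a)
                * (p θ * I.π θ τ * c a (totalFlow I yhat τ) θ) else 0 := by
        refine Finset.sum_congr rfl fun a _ => ?_
        rw [auxCost, Finset.mul_sum]
        refine Finset.sum_congr rfl fun θ _ => ?_
        rw [Finset.mul_sum]
        refine Finset.sum_congr rfl fun τ _ => ?_
        rw [mul_ite, mul_zero]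
      rw [expand]
      calc ∑ a, ∑ θ, ∑ τ : ∀ j, I.T j, (if τ k = tk then
              (zhat k tk a - yhat k tk a)
                * (p θ * I.π θ τ * c a (totalFlow I yhat τ) θ) else 0)
          = ∑ a, ∑ τ : ∀ j, I.T j, ∑ θ, (if τ k = tk then
              (zhat k tk a - yhat k tk a)
                * (p θ * I.π θ τ * c a (totalFlow I yhat τ) θ) else 0) :=
            Finset.sum_congr rfl fun a _ => Finset.sum_comm
        _ = ∑ τ : ∀ j, I.T j, ∑ a, ∑ θ, (if τ k = tk then
              (zhat k tk a - yhat k tk a)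
                * (p θ * I.π θ τ * c a (totalFlow I yhat τ) θ) else 0) := Finset.sum_comm
        _ = ∑ τ : ∀ j, I.T j, (if τ k = tk then ∑ a, ∑ θ,
              (zhat k tk a - yhat k tk a)
                * (p θ * I.π θ τ * c a (totalFlow I yhat τ) θ) else 0) := by
            refine Finset.sum_congr rfl fun τ _ => ?_
            by_cases hτ : τ k = tk
            · simp only [if_pos hτ]
            · simp only [if_neg hτ, Finset.sum_const_zero]
    rw [hRHS, hGroup (fun tk τ => ∑ a, ∑ θ, (zhat k tk a - yhat k tk a)
      * (p θ * I.π θ τ * c a (totalFlow I yhat τ) θ))]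
  rw [hE]
  exact Finset.sum_nonneg fun k _ => Finset.sum_nonneg fun tk _ => hkey k tk

/-- with a strictly convex potential in each state, the Bayesian Wardrop
equilibrium outcome of `(Γ, I)` is unique. -/
theorem unique_BWE_outcome
    (p : Θ → ℝ) (hp_pos : ∀ θ, 0 < p θ) (hp_sum : ∑ θ, p θ = 1)
    (c : A → (A → ℝ) → Θ → ℝ)
    (hc : ∀ a θ, ContinuousOn (fun y => c a y θ) (stdSimplex ℝ A))
    (Φ : Θ → (A → ℝ) → ℝ) (hΦ : IsPotential c Φ)
    (hconv : ∀ θ, StrictConvexOn ℝ (stdSimplex ℝ A) (Φ θ))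
    (I : InfoStructure Θ)
    (yhat yhat' : ∀ k, I.T k → A → ℝ)
    (h : IsBWEps I p c 0 yhat) (h' : IsBWEps I p c 0 yhat') :
    ∀ (θ : Θ) (z : A → ℝ), outcomeWeight I yhat θ z = outcomeWeight I yhat' θ z := by
  have hmem : ∀ τ, totalFlow I yhat τ ∈ stdSimplex ℝ A := totalFlow_mem_simplex h.1
  have hmem' : ∀ τ, totalFlow I yhat' τ ∈ stdSimplex ℝ A := totalFlow_mem_simplex h'.1
  have hFOC1 := FOC hp_pos h h'.1
  have hFOC2 := FOC hp_pos h' h.1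
  set Q : Θ → (∀ k, I.T k) → ℝ := fun θ τ => p θ * I.π θ τ *
    ((∑ a, (totalFlow I yhat' τ a - totalFlow I yhat τ a) * c a (totalFlow I yhat τ) θ)
      + (∑ a, (totalFlow I yhat τ a - totalFlow I yhat' τ a) * c a (totalFlow I yhat' τ) θ))
    with hQ
  have hQ_nonpos : ∀ θ τ, Q θ τ ≤ 0 := by
    intro θ τ
    simp only [hQ]
    rcases eq_or_ne (totalFlow I yhat τ) (totalFlow I yhat' τ) with heq | hne
    · have h1 : (∑ a, (totalFlow I yhat' τ a - totalFlow I yhat τ a)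
          * c a (totalFlow I yhat τ) θ) = 0 :=
        Finset.sum_eq_zero fun a _ => by rw [heq]; ring
      have h2 : (∑ a, (totalFlow I yhat τ a - totalFlow I yhat' τ a)
          * c a (totalFlow I yhat' τ) θ) = 0 :=
        Finset.sum_eq_zero fun a _ => by rw [heq]; ring
      rw [h1, h2]
      simp
    · have hlt := key_lt hΦ hconv θ (hmem τ) (hmem' τ) hne
      exact mul_nonpos_of_nonneg_of_nonpos
        (mul_nonneg (hp_pos θ).le (I.π_nonneg θ τ)) hlt.le
  have hsum : 0 ≤ ∑ θ, ∑ τ : ∀ k, I.T k, Q θ τ := by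
    have hadd := add_nonneg hFOC1 hFOC2
    have heq : ∑ θ, ∑ τ : ∀ k, I.T k, Q θ τ
        = (∑ θ, ∑ τ : ∀ k, I.T k, p θ * I.π θ τ *
            (∑ a, (totalFlow I yhat' τ a - totalFlow I yhat τ a)
              * c a (totalFlow I yhat τ) θ))
          + ∑ θ, ∑ τ : ∀ k, I.T k, p θ * I.π θ τ *
            (∑ a, (totalFlow I yhat τ a - totalFlow I yhat' τ a)
              * c a (totalFlow I yhat' τ) θ) := by
      rw [← Finset.sum_add_distrib]
      refine Finset.sum_congr rfl fun θ _ => ?_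
      rw [← Finset.sum_add_distrib]
      refine Finset.sum_congr rfl fun τ _ => ?_
      simp only [hQ]
      ring
    rw [heq]
    exact hadd
  have hzero : ∀ θ τ, Q θ τ = 0 := by
    have htot0 : ∑ θ, ∑ τ : ∀ k, I.T k, Q θ τ = 0 :=
      le_antisymm
        (Finset.sum_nonpos fun θ _ => Finset.sum_nonpos fun τ _ => hQ_nonpos θ τ) hsum
    intro θ τ
    have h1 := (Finset.sum_eq_zero_iff_of_nonpos
      (fun θ' _ => Finset.sum_nonpos fun τ' _ => hQ_nonpos θ' τ')).1 htot0 θ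
      (Finset.mem_univ θ)
    exact (Finset.sum_eq_zero_iff_of_nonpos
      (fun τ' _ => hQ_nonpos θ τ')).1 h1 τ (Finset.mem_univ τ)
  have hflow : ∀ θ τ, 0 < I.π θ τ → totalFlow I yhat τ = totalFlow I yhat' τ := by
    intro θ τ hπ
    by_contra hne
    have hlt := key_lt hΦ hconv θ (hmem τ) (hmem' τ) hne
    have hQθτ := hzero θ τ
    simp only [hQ] at hQθτ
    have hpπ : 0 < p θ * I.π θ τ := mul_pos (hp_pos θ) hπ
    have hneg := mul_neg_of_pos_of_neg hpπ hlt
    linarith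
  intro θ z
  rw [outcomeWeight, outcomeWeight]
  refine Finset.sum_congr rfl fun τ _ => ?_
  rcases eq_or_lt_of_le (I.π_nonneg θ τ) with h0 | hpos
  · split_ifs <;> simp [← h0]
  · rw [hflow θ τ hpos]

end NonatomicGames
end
end

section
/- Let Γ be a basic game that has a convex potential Φ_θ in each state θ, and let I be an information structure. Then for every α > 0, every Bayesian Wardrop α-equilibrium ŷ of (Γ, I) is an α-minimizer of the associated potential Φ_π: Φ_π(ŷ) ≤ min_{ẑ} Φ_π(ẑ) + α, where the minimum is over all interim flow profiles ẑ. -/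
noncomputable section

namespace NonatomicGames

open MeasureTheory Finset

variable {A Θ : Type} [Fintype A] [DecidableEq A] [Fintype Θ]

lemma sum_rotate3 {α β γ : Type*} [Fintype α] [Fintype β] [Fintype γ]
    (F : α → β → γ → ℝ) :
    ∑ x, ∑ y, ∑ z, F x y z = ∑ y, ∑ z, ∑ x, F x y z := by
  rw [Finset.sum_comm]
  exact Finset.sum_congr rfl fun y _ => Finset.sum_comm

lemma sum_rotate4 {α β γ δ : Type*} [Fintype α] [Fintype β] [Fintype γ] [Fintype δ]
    (F : α → β → γ → δ → ℝ) :
    ∑ x, ∑ y, ∑ z, ∑ w, F x y z w = ∑ w, ∑ x, ∑ y, ∑ z, F x y z w := by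
  calc ∑ x, ∑ y, ∑ z, ∑ w, F x y z w
      = ∑ x, ∑ y, ∑ w, ∑ z, F x y z w :=
        Finset.sum_congr rfl fun x _ => Finset.sum_congr rfl fun y _ => Finset.sum_comm
    _ = ∑ x, ∑ w, ∑ y, ∑ z, F x y z w :=
        Finset.sum_congr rfl fun x _ => Finset.sum_comm
    _ = ∑ w, ∑ x, ∑ y, ∑ z, F x y z w := Finset.sum_comm

lemma sum_fiber {Θ : Type} (I : InfoStructure Θ) (k : I.K)
    (f : I.T k → (∀ j, I.T j) → ℝ) :
    ∑ tk, ∑ τ, (if τ k = tk then f tk τ else 0) = ∑ τ, f (τ k) τ := by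
  rw [Finset.sum_comm]
  exact Finset.sum_congr rfl fun τ _ => by simp

/-- Gradient inequality for a convex potential. -/
lemma grad_ineq_s7 {A : Type} [Fintype A] [DecidableEq A]
    {f : (A → ℝ) → ℝ} {g : A → ℝ}
    (hconv : ConvexOn ℝ (stdSimplex ℝ A) f)
    {U : Set (A → ℝ)} (hUo : IsOpen U) (hsub : stdSimplex ℝ A ⊆ U)
    (hcd : ContDiffOn ℝ 1 f U)
    {y z : A → ℝ} (hy : y ∈ stdSimplex ℝ A) (hz : z ∈ stdSimplex ℝ A)
    (hder : ∀ a, fderiv ℝ f y (Pi.single a 1) = g a) :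
    f y + ∑ a, (z a - y a) * g a ≤ f z := by
  have hdiff : DifferentiableAt ℝ f y :=
    ((hcd.differentiableOn one_ne_zero).differentiableAt (hUo.mem_nhds (hsub hy)))
  have hL : fderiv ℝ f y (z - y) = ∑ a, (z a - y a) * g a := by
    have hrep : (z - y) = ∑ a, Pi.single a ((z - y) a) :=
      (Finset.univ_sum_single (z - y)).symm
    rw [hrep, map_sum]
    refine Finset.sum_congr rfl fun a _ => ?_
    have h1 : Pi.single a ((z - y) a) = (z a - y a) • (Pi.single a (1 : ℝ) : A → ℝ) := by
      funext b
      by_cases hb : b = a <;> simp [Pi.single_apply, hb]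
    rw [h1, (fderiv ℝ f y).map_smul, hder a, smul_eq_mul]
  set h : ℝ → (A → ℝ) := fun t => y + t • (z - y) with hhdef
  have h0 : h 0 = y := by simp [hhdef]
  have h1 : h 1 = z := by simp [hhdef]
  have hmem : ∀ t ∈ Set.Icc (0 : ℝ) 1, h t ∈ stdSimplex ℝ A := by
    intro t ht
    have hco : h t = (1 - t) • y + t • z := by
      funext a
      simp only [hhdef, Pi.add_apply, Pi.smul_apply, Pi.sub_apply, smul_eq_mul]
      ring
    rw [hco]
    exact (convex_stdSimplex ℝ A) hy hz (by linarith [ht.2]) ht.1 (by ring)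
  have hgconv : ConvexOn ℝ (Set.Icc (0 : ℝ) 1) (f ∘ h) := by
    refine ⟨convex_Icc 0 1, fun s hs t ht a b ha hb hab => ?_⟩
    have hb' : b = 1 - a := by linarith
    subst hb'
    have hcomb : h (a • s + (1 - a) • t) = a • h s + (1 - a) • h t := by
      funext x
      simp only [hhdef, Pi.add_apply, Pi.smul_apply, Pi.sub_apply, smul_eq_mul]
      ring
    simp only [Function.comp]
    rw [hcomb]
    exact hconv.2 (hmem s hs) (hmem t ht) ha hb hab
  have hh' : HasDerivAt h (z - y) 0 := by
    have hd : HasDerivAt (fun t : ℝ => t • (z - y)) ((1 : ℝ) • (z - y)) 0 :=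
      (hasDerivAt_id 0).smul_const (z - y)
    simpa [hhdef] using hd.const_add y
  have hg : HasDerivAt (f ∘ h) (fderiv ℝ f y (z - y)) 0 := by
    have hf : HasFDerivAt f (fderiv ℝ f y) (h 0) := by rw [h0]; exact hdiff.hasFDerivAt
    exact hf.comp_hasDerivAt 0 hh'
  have hslope := hgconv.le_slope_of_hasDerivAt (Set.left_mem_Icc.2 zero_le_one)
    (Set.right_mem_Icc.2 zero_le_one) zero_lt_one hg
  rw [hL] at hslope
  simp only [slope, Function.comp_apply, h0, h1, sub_zero, vsub_eq_sub] at hslope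
  have : ∑ a, (z a - y a) * g a ≤ f z - f y := by
    simpa using hslope
  linarith

/-- with a convex potential in each state, every Bayesian Wardrop
α-equilibrium is an α-minimizer of the associated potential `Φ_π`. -/
theorem alpha_equilibrium_alpha_minimizer
    (p : Θ → ℝ) (hp_pos : ∀ θ, 0 < p θ) (hp_sum : ∑ θ, p θ = 1)
    (c : A → (A → ℝ) → Θ → ℝ)
    (hc : ∀ a θ, ContinuousOn (fun y => c a y θ) (stdSimplex ℝ A))
    (Φ : Θ → (A → ℝ) → ℝ) (hΦ : IsPotential c Φ)
    (hconv : ∀ θ, ConvexOn ℝ (stdSimplex ℝ A) (Φ θ))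
    (I : InfoStructure Θ) (α : ℝ) (hα : 0 < α)
    (yhat : ∀ k, I.T k → A → ℝ) (h : IsBWEps I p c α yhat) :
    ∀ zhat : ∀ k, I.T k → A → ℝ, IsInterim I zhat →
      potPi I p Φ yhat ≤ potPi I p Φ zhat + α := by
  intro zhat hz
  obtain ⟨⟨hy_nn, hy_sum⟩, heq⟩ := h
  obtain ⟨hz_nn, hz_sum⟩ := hz
  -- nonemptiness facts
  have hΘne : Nonempty Θ := by
    by_contra hne
    rw [not_nonempty_iff] at hne
    simp [Finset.univ_eq_empty] at hp_sum
  have hτne : Nonempty (∀ j, I.T j) := by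
    by_contra hne
    rw [not_nonempty_iff] at hne
    have := I.π_sum (Classical.arbitrary Θ)
    simp [Finset.univ_eq_empty] at this
  have hKne : Nonempty I.K := by
    by_contra hne
    rw [not_nonempty_iff] at hne
    have := I.γ_sum
    simp [Finset.univ_eq_empty] at this
  have hAne : Nonempty A := by
    by_contra hne
    rw [not_nonempty_iff] at hne
    have hk := hy_sum (Classical.arbitrary I.K) ((Classical.arbitrary (∀ j, I.T j)) _)
    rw [Finset.univ_eq_empty, Finset.sum_empty] at hk
    exact absurd hk.symm (ne_of_gt (I.γ_pos _))
  -- total flows of interim profiles lie in the simplex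
  have hmem : ∀ (w : ∀ k, I.T k → A → ℝ), (∀ k t a, 0 ≤ w k t a) →
      (∀ k t, ∑ a, w k t a = I.γ k) → ∀ τ, totalFlow I w τ ∈ stdSimplex ℝ A := by
    intro w hnn hsum τ
    constructor
    · intro a; exact Finset.sum_nonneg fun k _ => hnn k (τ k) a
    · calc ∑ a, ∑ k, w k (τ k) a = ∑ k, ∑ a, w k (τ k) a := Finset.sum_comm
        _ = ∑ k, I.γ k := Finset.sum_congr rfl fun k _ => hsum k (τ k)
        _ = 1 := I.γ_sum
  have hymem := hmem yhat hy_nn hy_sum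
  have hzmem := hmem zhat hz_nn hz_sum
  -- Step B: gradient inequality summed up
  have hB : potPi I p Φ yhat +
      (∑ θ, ∑ τ, p θ * I.π θ τ *
        ∑ a, (totalFlow I zhat τ a - totalFlow I yhat τ a) * c a (totalFlow I yhat τ) θ)
      ≤ potPi I p Φ zhat := by
    unfold potPi
    rw [← Finset.sum_add_distrib]
    refine Finset.sum_le_sum fun θ _ => ?_
    rw [← Finset.sum_add_distrib]
    refine Finset.sum_le_sum fun τ _ => ?_
    rw [← mul_add]
    refine mul_le_mul_of_nonneg_left ?_ (mul_nonneg (hp_pos θ).le (I.π_nonneg θ τ))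
    obtain ⟨U, hUo, hsub, hcd, hder⟩ := hΦ θ
    exact grad_ineq_s7 (hconv θ) hUo hsub hcd (hymem τ) (hzmem τ)
      (fun a => hder _ (hymem τ) a)
  -- Step C: rewrite the linear term via the auxiliary costs
  have hC : (∑ θ, ∑ τ, p θ * I.π θ τ *
        ∑ a, (totalFlow I zhat τ a - totalFlow I yhat τ a) * c a (totalFlow I yhat τ) θ)
      = ∑ k, ∑ tk, ∑ a, (zhat k tk a - yhat k tk a) * auxCost I p c yhat k tk a := by
    have hLHS : (∑ θ, ∑ τ, p θ * I.π θ τ *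
          ∑ a, (totalFlow I zhat τ a - totalFlow I yhat τ a) * c a (totalFlow I yhat τ) θ)
        = ∑ k, ∑ τ : ∀ j, I.T j, ∑ a, ∑ θ,
            (zhat k (τ k) a - yhat k (τ k) a) *
              (p θ * I.π θ τ * c a (totalFlow I yhat τ) θ) := by
      have e1 : (∑ θ, ∑ τ, p θ * I.π θ τ *
            ∑ a, (totalFlow I zhat τ a - totalFlow I yhat τ a) * c a (totalFlow I yhat τ) θ)
          = ∑ θ, ∑ τ : ∀ j, I.T j, ∑ a, ∑ k,
              (zhat k (τ k) a - yhat k (τ k) a) *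
                (p θ * I.π θ τ * c a (totalFlow I yhat τ) θ) := by
        refine Finset.sum_congr rfl fun θ _ => Finset.sum_congr rfl fun τ _ => ?_
        rw [Finset.mul_sum]
        refine Finset.sum_congr rfl fun a _ => ?_
        have hdiff : totalFlow I zhat τ a - totalFlow I yhat τ a
            = ∑ k, (zhat k (τ k) a - yhat k (τ k) a) := by
          unfold totalFlow
          rw [Finset.sum_sub_distrib]
        rw [hdiff, Finset.sum_mul, Finset.mul_sum]
        exact Finset.sum_congr rfl fun k _ => by ring
      rw [e1, sum_rotate4]
      exact Finset.sum_congr rfl fun k _ => sum_rotate3 _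
    have hRHS : ∀ k, (∑ tk, ∑ a, (zhat k tk a - yhat k tk a) * auxCost I p c yhat k tk a)
        = ∑ τ : ∀ j, I.T j, ∑ a, ∑ θ,
            (zhat k (τ k) a - yhat k (τ k) a) *
              (p θ * I.π θ τ * c a (totalFlow I yhat τ) θ) := by
      intro k
      have e2 : ∀ tk, (∑ a, (zhat k tk a - yhat k tk a) * auxCost I p c yhat k tk a)
          = ∑ τ : ∀ j, I.T j, if τ k = tk then
              (∑ a, ∑ θ, (zhat k tk a - yhat k tk a) *
                (p θ * I.π θ τ * c a (totalFlow I yhat τ) θ)) else 0 := by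
        intro tk
        unfold auxCost
        have e3 : (∑ a, (zhat k tk a - yhat k tk a) *
              ∑ θ, ∑ τ : ∀ j, I.T j,
                (if τ k = tk then p θ * I.π θ τ * c a (totalFlow I yhat τ) θ else 0))
            = ∑ a, ∑ θ, ∑ τ : ∀ j, I.T j,
                (if τ k = tk then (zhat k tk a - yhat k tk a) *
                  (p θ * I.π θ τ * c a (totalFlow I yhat τ) θ) else 0) := by
          refine Finset.sum_congr rfl fun a _ => ?_
          rw [Finset.mul_sum]
          refine Finset.sum_congr rfl fun θ _ => ?_
          rw [Finset.mul_sum]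
          exact Finset.sum_congr rfl fun τ _ => by rw [mul_ite, mul_zero]
        rw [e3, sum_rotate3, sum_rotate3]
        refine Finset.sum_congr rfl fun τ _ => ?_
        by_cases hP : τ k = tk <;> simp [hP]
      calc (∑ tk, ∑ a, (zhat k tk a - yhat k tk a) * auxCost I p c yhat k tk a)
          = ∑ tk, ∑ τ : ∀ j, I.T j, if τ k = tk then
              (∑ a, ∑ θ, (zhat k tk a - yhat k tk a) *
                (p θ * I.π θ τ * c a (totalFlow I yhat τ) θ)) else 0 :=
            Finset.sum_congr rfl fun tk _ => e2 tk
        _ = _ := sum_fiber I k _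
    rw [hLHS]
    exact Finset.sum_congr rfl fun k _ => (hRHS k).symm
  -- type probabilities
  have hP_nn : ∀ (k : I.K) (tk : I.T k), 0 ≤ typeProb I p k tk := by
    intro k tk
    refine Finset.sum_nonneg fun θ _ => Finset.sum_nonneg fun τ _ => ?_
    by_cases hE : τ k = tk <;>
      simp [hE, mul_nonneg (hp_pos θ).le (I.π_nonneg θ τ)]
  have hP_sum : ∀ k : I.K, ∑ tk, typeProb I p k tk = 1 := by
    intro k
    unfold typeProb
    calc ∑ tk, ∑ θ, ∑ τ : ∀ j, I.T j, (if τ k = tk then p θ * I.π θ τ else 0)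
        = ∑ θ, ∑ tk, ∑ τ : ∀ j, I.T j, (if τ k = tk then p θ * I.π θ τ else 0) :=
          Finset.sum_comm
      _ = ∑ θ, ∑ τ : ∀ j, I.T j, p θ * I.π θ τ :=
          Finset.sum_congr rfl fun θ _ => sum_fiber I k _
      _ = ∑ θ, p θ := by
          refine Finset.sum_congr rfl fun θ _ => ?_
          rw [← Finset.mul_sum, I.π_sum θ, mul_one]
      _ = 1 := hp_sum
  -- Step D: per-population equilibrium bound
  have hD : ∀ (k : I.K) (tk : I.T k),
      -(α * I.γ k * typeProb I p k tk)
        ≤ ∑ a, (zhat k tk a - yhat k tk a) * auxCost I p c yhat k tk a := by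
    intro k tk
    set C := fun a => auxCost I p c yhat k tk a with hCdef
    rcases eq_or_lt_of_le (hP_nn k tk) with hP0 | hPpos
    · -- typeProb = 0 : all auxiliary costs vanish
      have hπ0 : ∀ θ (τ : ∀ j, I.T j), τ k = tk → p θ * I.π θ τ = 0 := by
        intro θ τ hE
        have h1 := (Finset.sum_eq_zero_iff_of_nonneg (fun θ _ =>
          Finset.sum_nonneg fun τ _ => by
            by_cases hE' : τ k = tk <;>
              simp [hE', mul_nonneg (hp_pos θ).le (I.π_nonneg θ τ)])).1 hP0.symm θ
          (Finset.mem_univ θ)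
        have h2 := (Finset.sum_eq_zero_iff_of_nonneg (fun τ _ => by
          by_cases hE' : τ k = tk <;>
            simp [hE', mul_nonneg (hp_pos θ).le (I.π_nonneg θ _)])).1 h1 τ
          (Finset.mem_univ τ)
        simpa [hE] using h2
      have hC0 : ∀ a, C a = 0 := by
        intro a
        refine Finset.sum_eq_zero fun θ _ => Finset.sum_eq_zero fun τ _ => ?_
        by_cases hE : τ k = tk
        · simp [hE, hπ0 θ τ hE]
        · simp [hE]
      have hC0' : ∀ a, auxCost I p c yhat k tk a = 0 := hC0
      simp [hC0', ← hP0]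
    · -- typeProb > 0 : use the equilibrium conditions
      obtain ⟨b, _, hbmin⟩ := Finset.exists_min_image Finset.univ C
        ⟨Classical.arbitrary A, Finset.mem_univ _⟩
      have hsplit : ∀ a, (∑ θ, ∑ τ : ∀ j, I.T j,
          if τ k = tk then
            p θ * I.π θ τ * (c a (totalFlow I yhat τ) θ - c b (totalFlow I yhat τ) θ)
          else 0) = C a - C b := by
        intro a
        show (∑ θ, ∑ τ : ∀ j, I.T j,
            if τ k = tk then
              p θ * I.π θ τ * (c a (totalFlow I yhat τ) θ - c b (totalFlow I yhat τ) θ)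
            else 0) = auxCost I p c yhat k tk a - auxCost I p c yhat k tk b
        unfold auxCost
        rw [← Finset.sum_sub_distrib]
        refine Finset.sum_congr rfl fun θ _ => ?_
        rw [← Finset.sum_sub_distrib]
        refine Finset.sum_congr rfl fun τ _ => ?_
        by_cases hE : τ k = tk <;> simp [hE, mul_sub]
      have hub : ∀ a, yhat k tk a * C a ≤ yhat k tk a * (C b + α * typeProb I p k tk) := by
        intro a
        rcases eq_or_lt_of_le (hy_nn k tk a) with h0 | hpos
        · rw [← h0]; simp
        · refine mul_le_mul_of_nonneg_left ?_ (le_of_lt hpos)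
          have := heq k tk hPpos a b hpos
          rw [hsplit a] at this
          linarith
      have hy_bound : ∑ a, yhat k tk a * C a ≤ I.γ k * (C b + α * typeProb I p k tk) := by
        calc ∑ a, yhat k tk a * C a
            ≤ ∑ a, yhat k tk a * (C b + α * typeProb I p k tk) :=
              Finset.sum_le_sum fun a _ => hub a
          _ = (∑ a, yhat k tk a) * (C b + α * typeProb I p k tk) :=
              (Finset.sum_mul _ _ _).symm
          _ = I.γ k * (C b + α * typeProb I p k tk) := by rw [hy_sum k tk]
      have hz_bound : I.γ k * C b ≤ ∑ a, zhat k tk a * C a := by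
        calc I.γ k * C b = (∑ a, zhat k tk a) * C b := by rw [hz_sum k tk]
          _ = ∑ a, zhat k tk a * C b := Finset.sum_mul _ _ _
          _ ≤ ∑ a, zhat k tk a * C a :=
              Finset.sum_le_sum fun a _ =>
                mul_le_mul_of_nonneg_left (hbmin a (Finset.mem_univ a)) (hz_nn k tk a)
      have hexp : ∑ a, (zhat k tk a - yhat k tk a) * C a
          = (∑ a, zhat k tk a * C a) - ∑ a, yhat k tk a * C a := by
        rw [← Finset.sum_sub_distrib]
        exact Finset.sum_congr rfl fun a _ => by ring
      rw [hexp]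
      nlinarith [I.γ_pos k]
  -- summing up the per-population bounds
  have hDsum : -α ≤ ∑ k, ∑ tk, ∑ a, (zhat k tk a - yhat k tk a) * auxCost I p c yhat k tk a := by
    have hneg : ∑ k, ∑ tk : I.T k, -(α * I.γ k * typeProb I p k tk) = -α := by
      have h1 : ∀ k : I.K, ∑ tk : I.T k, -(α * I.γ k * typeProb I p k tk)
          = -(α * I.γ k) := by
        intro k
        rw [Finset.sum_neg_distrib, ← Finset.mul_sum, hP_sum k, mul_one]
      rw [Finset.sum_congr rfl fun k _ => h1 k, Finset.sum_neg_distrib,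
        ← Finset.mul_sum, I.γ_sum, mul_one]
    calc -α = ∑ k, ∑ tk : I.T k, -(α * I.γ k * typeProb I p k tk) := hneg.symm
      _ ≤ _ := Finset.sum_le_sum fun k _ => Finset.sum_le_sum fun tk _ => hD k tk
  rw [hC] at hB
  linarith

end NonatomicGames
end
end
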